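/- arXiv:1212.4467 — 7 statements merged into one kernel-verified Lean document; each statement's English description precedes it below -/
import Mathlib

section
/- Let f be a continuous function on the unit circle with f(z) ≥ 0 for all |z| = 1 and f not identically zero. Suppose p_0, …, p_{n−1} are polynomials with complex coefficients such that p_k has degree k with leading coefficient κ_k > 0 and ∮_{|z|=1} conj(p_j(z)) p_k(z) f(z) dz/(2πiz) = δ_{jk} for all 0 ≤ j, k ≤ n−1. Then the continuous Toeplitz determinant satisfies 𝒯_n(f) = ∏_{j=0}^{n−1} κ_j^{−2}. -/
open Finset

private lemma circleIntegral_finset_sum {ι : Type*} (s : Finset ι) (F : ι → ℂ → ℂ)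
    (h : ∀ i ∈ s, CircleIntegrable (F i) 0 1) :
    (∮ z in C(0, 1), ∑ i ∈ s, F i z) = ∑ i ∈ s, ∮ z in C(0, 1), F i z := by
  simp only [circleIntegral, smul_sum]
  exact intervalIntegral.integral_finset_sum fun i hi => (h i hi).out

/-- If `p_0, …, p_{n−1}` are orthonormal polynomials (with `deg p_k = k` and
positive leading coefficients `κ_k`) for the weight `f(z) dz/(2πiz)` on the unit circle, where
`f` is continuous, nonnegative and not identically zero on the circle, then the continuous
Toeplitz determinant `𝒯_n(f)` equals `∏_{j<n} κ_j⁻²`. -/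
theorem stmt_2 (n : ℕ) (hn : 0 < n) (f : ℂ → ℂ)
    (hf_cont : ContinuousOn f {z : ℂ | ‖z‖ = 1})
    (hf_nonneg : ∀ z : ℂ, ‖z‖ = 1 → 0 ≤ (f z).re ∧ (f z).im = 0)
    (hf_ne : ∃ z : ℂ, ‖z‖ = 1 ∧ f z ≠ 0)
    (p : Fin n → Polynomial ℂ) (κ : Fin n → ℝ)
    (hdeg : ∀ k, (p k).natDegree = (k : ℕ))
    (hκpos : ∀ k, 0 < κ k)
    (hlead : ∀ k, (p k).leadingCoeff = (κ k : ℂ))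
    (horth : ∀ j k : Fin n,
      (∮ z in C(0, 1), (starRingEnd ℂ) ((p j).eval z) * (p k).eval z * f z / z)
        / (2 * Real.pi * Complex.I) = if j = k then 1 else 0) :
    Matrix.det (Matrix.of fun j k : Fin n =>
      (∮ z in C(0, 1), z ^ ((k : ℤ) - (j : ℤ)) * f z / z) / (2 * Real.pi * Complex.I))
    = ∏ j : Fin n, ((κ j : ℂ)) ^ (-2 : ℤ) := by
  have hsphere : (Metric.sphere (0 : ℂ) 1) = {z : ℂ | ‖z‖ = 1} := by
    ext z; simp [Complex.dist_eq]
  have hf_cont' : ContinuousOn f (Metric.sphere (0 : ℂ) 1) := hsphere ▸ hf_cont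
  have hzne : ∀ z ∈ Metric.sphere (0 : ℂ) 1, z ≠ 0 := by
    intro z hz h0
    rw [hsphere] at hz
    simp [h0] at hz
  have hcontm : ∀ m : ℤ, ContinuousOn (fun z : ℂ => z ^ m * f z / z) (Metric.sphere (0 : ℂ) 1) := by
    intro m
    refine ContinuousOn.div (ContinuousOn.mul ?_ hf_cont') continuousOn_id hzne
    exact fun z hz => (continuousAt_zpow₀ z m (Or.inl (hzne z hz))).continuousWithinAt
  have coeff_zero : ∀ (j : Fin n) (r : ℕ), (j : ℕ) + 1 ≤ r → (p j).coeff r = 0 := by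
    intro j r hr
    exact Polynomial.coeff_eq_zero_of_natDegree_lt (by rw [hdeg]; omega)
  -- key expansion of the orthogonality relation
  have key : ∀ j k : Fin n,
      (∑ r ∈ range ((j : ℕ) + 1), ∑ s ∈ range ((k : ℕ) + 1),
        (starRingEnd ℂ) ((p j).coeff r) * (p k).coeff s *
          ((∮ z in C(0, 1), z ^ ((s : ℤ) - (r : ℤ)) * f z / z) / (2 * Real.pi * Complex.I)))
      = if j = k then 1 else 0 := by
    intro j k
    rw [← horth j k]
    have hexp : (∮ z in C(0, 1), (starRingEnd ℂ) ((p j).eval z) * (p k).eval z * f z / z)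
        = ∑ rs ∈ (range ((j : ℕ) + 1)) ×ˢ (range ((k : ℕ) + 1)),
          (starRingEnd ℂ) ((p j).coeff rs.1) * (p k).coeff rs.2 *
            (∮ z in C(0, 1), z ^ ((rs.2 : ℤ) - (rs.1 : ℤ)) * f z / z) := by
      have hcongr : (∮ z in C(0, 1), (starRingEnd ℂ) ((p j).eval z) * (p k).eval z * f z / z)
          = ∮ z in C(0, 1), ∑ rs ∈ (range ((j : ℕ) + 1)) ×ˢ (range ((k : ℕ) + 1)),
              (starRingEnd ℂ) ((p j).coeff rs.1) * (p k).coeff rs.2 *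
                (z ^ ((rs.2 : ℤ) - (rs.1 : ℤ)) * f z / z) := by
        refine circleIntegral.integral_congr zero_le_one fun z hz => ?_
        have hz0 : z ≠ 0 := hzne z hz
        have habs : ‖z‖ = 1 := by rw [hsphere] at hz; exact hz
        have hconj : (starRingEnd ℂ) z = z⁻¹ := by
          rw [RCLike.inv_eq_conj]; rw [habs]
        rw [Polynomial.eval_eq_sum_range' (lt_of_le_of_lt (le_of_eq (hdeg j)) (Nat.lt_succ_self _)),
            Polynomial.eval_eq_sum_range' (lt_of_le_of_lt (le_of_eq (hdeg k)) (Nat.lt_succ_self _)),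
            map_sum]
        simp only [map_mul, map_pow, hconj]
        rw [Finset.sum_mul_sum]
        rw [Finset.sum_product]
        rw [Finset.sum_mul, Finset.sum_div]
        simp only [Nat.succ_eq_add_one]
        refine Finset.sum_congr rfl fun r hr => ?_
        rw [Finset.sum_mul, Finset.sum_div]
        refine Finset.sum_congr rfl fun s hs => ?_
        rw [zpow_sub₀ hz0, zpow_natCast, zpow_natCast, inv_pow]
        field_simp
      rw [hcongr, circleIntegral_finset_sum]
      · exact Finset.sum_congr rfl fun rs _ => by
          rw [circleIntegral.integral_const_mul]
      · intro rs _
        exact ContinuousOn.circleIntegrable zero_le_one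
          (continuousOn_const.mul (hcontm _))
    rw [hexp, Finset.sum_div, Finset.sum_product]
    exact Finset.sum_congr rfl fun r _ =>
      Finset.sum_congr rfl fun s _ => (mul_div_assoc _ _ _).symm
  -- matrix setup
  set A : Matrix (Fin n) (Fin n) ℂ := Matrix.of fun j r : Fin n => (p j).coeff r with hA
  set T : Matrix (Fin n) (Fin n) ℂ := Matrix.of fun j k : Fin n =>
      (∮ z in C(0, 1), z ^ ((k : ℤ) - (j : ℤ)) * f z / z) / (2 * Real.pi * Complex.I) with hT
  have hAT : A.map (starRingEnd ℂ) * T * A.transpose = 1 := by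
    ext j k
    simp only [Matrix.mul_apply, Matrix.transpose_apply, Matrix.map_apply, Matrix.one_apply,
      hA, hT, Matrix.of_apply]
    rw [← key j k]
    have step1 : ∀ s : Fin n,
        (∑ r : Fin n, (starRingEnd ℂ) ((p j).coeff r) *
          ((∮ z in C(0, 1), z ^ ((s : ℤ) - (r : ℤ)) * f z / z) / (2 * Real.pi * Complex.I)))
          * (p k).coeff s
        = ∑ r : Fin n, (starRingEnd ℂ) ((p j).coeff r) * (p k).coeff s *
            ((∮ z in C(0, 1), z ^ ((s : ℤ) - (r : ℤ)) * f z / z) / (2 * Real.pi * Complex.I)) := by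
      intro s
      rw [Finset.sum_mul]
      exact Finset.sum_congr rfl fun r _ => by ring
    calc (∑ s : Fin n, (∑ r : Fin n, (starRingEnd ℂ) ((p j).coeff r) *
            ((∮ z in C(0, 1), z ^ ((s : ℤ) - (r : ℤ)) * f z / z) / (2 * Real.pi * Complex.I)))
            * (p k).coeff s)
        = ∑ r : Fin n, ∑ s : Fin n, (starRingEnd ℂ) ((p j).coeff r) * (p k).coeff s *
            ((∮ z in C(0, 1), z ^ ((s : ℤ) - (r : ℤ)) * f z / z) / (2 * Real.pi * Complex.I)) := by
          rw [Finset.sum_comm]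
          exact Finset.sum_congr rfl fun s _ => step1 s
      _ = ∑ r ∈ range n, ∑ s ∈ range n, (starRingEnd ℂ) ((p j).coeff r) * (p k).coeff s *
            ((∮ z in C(0, 1), z ^ ((s : ℤ) - (r : ℤ)) * f z / z) / (2 * Real.pi * Complex.I)) := by
          rw [Fin.sum_univ_eq_sum_range (fun r => ∑ s : Fin n, (starRingEnd ℂ) ((p j).coeff r)
            * (p k).coeff s *
            ((∮ z in C(0, 1), z ^ ((s : ℤ) - (r : ℤ)) * f z / z) / (2 * Real.pi * Complex.I)))]
          exact Finset.sum_congr rfl fun r _ =>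
            Fin.sum_univ_eq_sum_range (fun s => (starRingEnd ℂ) ((p j).coeff r) * (p k).coeff s *
              ((∮ z in C(0, 1), z ^ ((s : ℤ) - (r : ℤ)) * f z / z) / (2 * Real.pi * Complex.I))) n
      _ = ∑ r ∈ range ((j : ℕ) + 1), ∑ s ∈ range ((k : ℕ) + 1),
            (starRingEnd ℂ) ((p j).coeff r) * (p k).coeff s *
            ((∮ z in C(0, 1), z ^ ((s : ℤ) - (r : ℤ)) * f z / z) / (2 * Real.pi * Complex.I)) := by
          rw [← Finset.sum_subset (Finset.range_subset_range.2 (Nat.succ_le_of_lt j.isLt))]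
          · refine Finset.sum_congr rfl fun r _ => ?_
            rw [← Finset.sum_subset (Finset.range_subset_range.2 (Nat.succ_le_of_lt k.isLt))]
            intro s _ hs
            rw [coeff_zero k s (by simpa using hs)]
            ring
          · intro r _ hr
            rw [coeff_zero j r (by simpa using hr)]
            simp
  -- determinant of A
  have hdetA : A.det = ((∏ j, κ j : ℝ) : ℂ) := by
    rw [Matrix.det_of_lowerTriangular A (fun i j hij => by
      simp only [hA, Matrix.of_apply]
      exact coeff_zero i j (by
        have : (i : ℕ) < (j : ℕ) := hij
        omega))]
    push_cast
    refine Finset.prod_congr rfl fun j _ => ?_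
    simp only [hA, Matrix.of_apply]
    rw [show ((j : ℕ)) = (p j).natDegree from (hdeg j).symm, Polynomial.coeff_natDegree, hlead]
  set K : ℂ := ((∏ j, κ j : ℝ) : ℂ) with hKdef
  have hK : K ≠ 0 := by
    simp only [hKdef, Complex.ofReal_ne_zero]
    exact ne_of_gt (Finset.prod_pos fun j _ => hκpos j)
  have hconjK : (starRingEnd ℂ) K = K := Complex.conj_ofReal _
  have hdet : K * T.det * K = 1 := by
    have := congrArg Matrix.det hAT
    rw [Matrix.det_mul, Matrix.det_mul, Matrix.det_one, Matrix.det_transpose] at this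
    have hmap : (A.map ⇑(starRingEnd ℂ)).det = (starRingEnd ℂ) A.det := by
      rw [RingHom.map_det]
      rfl
    rw [hmap, hdetA, hconjK] at this
    exact this
  have hTdet : T.det = (K * K)⁻¹ := by
    field_simp
    linear_combination hdet
  rw [hTdet, hKdef]
  rw [show (∏ j : Fin n, ((κ j : ℂ)) ^ (-2 : ℤ)) = (∏ j : Fin n, ((κ j : ℂ) * (κ j : ℂ)))⁻¹ by
    rw [← Finset.prod_inv_distrib]
    refine Finset.prod_congr rfl fun j _ => ?_
    rw [show ((κ j : ℂ)) ^ (-2 : ℤ) = (((κ j : ℂ)) ^ (2 : ℕ))⁻¹ by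
      rw [← zpow_natCast]
      norm_num]
    ring_nf]
  congr 1
  push_cast
  rw [Finset.prod_mul_distrib]
end

section
/- Let n ≥ 1, M > 0, and let β_0 < β_1 < ⋯ < β_{n−1} < β_0 + M be real numbers. Suppose σ is a permutation of {0, 1, …, n−1} and h_0, …, h_{n−1} are integers with h_0 + h_1 + ⋯ + h_{n−1} = 0 such that the numbers β'_j := β_{σ(j)} + h_j M satisfy β'_0 < β'_1 < ⋯ < β'_{n−1} < β'_0 + M. Then σ is the identity permutation and h_j = 0 for all j. -/
open Finset

/-- Key uniqueness property `𝕃_M(β) ∩ D_n(M) = {β}` of the affine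
Karlin–McGregor argument: if `β_0 < ⋯ < β_{n−1} < β_0 + M` and a rearrangement
`β'_j = β_{σ(j)} + h_j M` (with `Σ h_j = 0`) again satisfies
`β'_0 < ⋯ < β'_{n−1} < β'_0 + M`, then `σ = id` and all `h_j = 0`. -/
theorem stmt_6 (n : ℕ) (hn : 1 ≤ n) (M : ℝ) (hM : 0 < M)
    (β : Fin n → ℝ) (hβ : StrictMono β)
    (hβM : β ⟨n - 1, by omega⟩ < β ⟨0, by omega⟩ + M)
    (σ : Equiv.Perm (Fin n)) (h : Fin n → ℤ) (hsum : ∑ j, h j = 0)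
    (β' : Fin n → ℝ) (hβ' : ∀ j, β' j = β (σ j) + (h j : ℝ) * M)
    (hβ'mono : StrictMono β')
    (hβ'M : β' ⟨n - 1, by omega⟩ < β' ⟨0, by omega⟩ + M) :
    σ = 1 ∧ ∀ j, h j = 0 := by
  set z : Fin n := ⟨0, by omega⟩ with hz
  set l : Fin n := ⟨n - 1, by omega⟩ with hl
  have hzle : ∀ a : Fin n, z ≤ a := fun a => by
    simp [Fin.le_def, hz]
  have hlle : ∀ a : Fin n, a ≤ l := fun a => by
    have := a.isLt; simp [Fin.le_def, hl]; omega
  -- β window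
  have hβwin : ∀ a b : Fin n, β a - β b < M := by
    intro a b
    have h1 : β a ≤ β l := hβ.monotone (hlle a)
    have h2 : β z ≤ β b := hβ.monotone (hzle b)
    linarith
  -- β' window
  have hβ'win : ∀ i j : Fin n, i < j → 0 < β' j - β' i ∧ β' j - β' i < M := by
    intro i j hij
    have h1 : β' j ≤ β' l := hβ'mono.monotone (hlle j)
    have h2 : β' z ≤ β' i := hβ'mono.monotone (hzle i)
    have h3 : β' i < β' j := hβ'mono hij
    constructor <;> linarith
  -- key step
  have hstep : ∀ i j : Fin n, i < j →
      (σ i < σ j ∧ h j = h i) ∨ (σ j < σ i ∧ h j = h i + 1) := by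
    intro i j hij
    obtain ⟨hw1, hw2⟩ := hβ'win i j hij
    have heq : β' j - β' i = (β (σ j) - β (σ i)) + ((h j - h i : ℤ) : ℝ) * M := by
      rw [hβ' i, hβ' j]; push_cast; ring
    rcases lt_trichotomy (σ i) (σ j) with hc | hc | hc
    · left; refine ⟨hc, ?_⟩
      have hb1 : 0 < β (σ j) - β (σ i) := by have := hβ hc; linarith
      have hb2 : β (σ j) - β (σ i) < M := hβwin _ _
      have d1 : ((h j - h i : ℤ) : ℝ) * M < 1 * M := by linarith
      have d2 : (-1 : ℝ) * M < ((h j - h i : ℤ) : ℝ) * M := by linarith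
      have e1 : ((h j - h i : ℤ) : ℝ) < 1 := by
        have := (mul_lt_mul_iff_of_pos_right hM).mp d1; linarith
      have e2 : (-1 : ℝ) < ((h j - h i : ℤ) : ℝ) := by
        have := (mul_lt_mul_iff_of_pos_right hM).mp d2; linarith
      have e1' : (h j - h i : ℤ) < 1 := by exact_mod_cast e1
      have e2' : (-1 : ℤ) < (h j - h i : ℤ) := by exact_mod_cast e2
      omega
    · exact absurd (σ.injective hc) (ne_of_lt hij)
    · right; refine ⟨hc, ?_⟩
      have hb1 : β (σ j) - β (σ i) < 0 := by have := hβ hc; linarith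
      have hb2 : -M < β (σ j) - β (σ i) := by have := hβwin (σ i) (σ j); linarith
      have d1 : ((h j - h i : ℤ) : ℝ) * M < 2 * M := by linarith
      have d2 : (0 : ℝ) * M < ((h j - h i : ℤ) : ℝ) * M := by linarith
      have e1 : ((h j - h i : ℤ) : ℝ) < 2 := by
        have := (mul_lt_mul_iff_of_pos_right hM).mp d1; linarith
      have e2 : (0 : ℝ) < ((h j - h i : ℤ) : ℝ) := by
        have := (mul_lt_mul_iff_of_pos_right hM).mp d2; linarith
      have e1' : (h j - h i : ℤ) < 2 := by exact_mod_cast e1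
      have e2' : (0 : ℤ) < (h j - h i : ℤ) := by exact_mod_cast e2
      omega
  -- bounds on h j
  have hbnd : ∀ j : Fin n, h z ≤ h j ∧ h j ≤ h z + 1 := by
    intro j
    rcases eq_or_lt_of_le (hzle j) with rfl | hlt
    · omega
    · rcases hstep z j hlt with ⟨_, e⟩ | ⟨_, e⟩ <;> omega
  -- sum argument
  have hsum2 : ∑ j : Fin n, (h j - h z) = -(n * h z) := by
    rw [Finset.sum_sub_distrib, hsum, Finset.sum_const, card_univ, Fintype.card_fin]
    push_cast; ring
  have hnonneg : ∀ j ∈ (univ : Finset (Fin n)), 0 ≤ h j - h z := fun j _ => by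
    have := (hbnd j).1; omega
  have hge : 0 ≤ ∑ j : Fin n, (h j - h z) := Finset.sum_nonneg hnonneg
  have hle : ∑ j : Fin n, (h j - h z) ≤ (n : ℤ) - 1 := by
    have hzmem : z ∈ (univ : Finset (Fin n)) := mem_univ z
    rw [← Finset.sum_erase_add _ _ hzmem]
    have : ∑ j ∈ (univ : Finset (Fin n)).erase z, (h j - h z) ≤
        ((univ : Finset (Fin n)).erase z).card • (1 : ℤ) := by
      apply Finset.sum_le_card_nsmul
      intro j hj
      have := (hbnd j).2; omega
    have hcard : ((univ : Finset (Fin n)).erase z).card = n - 1 := by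
      rw [Finset.card_erase_of_mem hzmem, card_univ, Fintype.card_fin]
    rw [hcard] at this
    have : ∑ j ∈ (univ : Finset (Fin n)).erase z, (h j - h z) ≤ ((n : ℤ) - 1) := by
      have : ((n - 1 : ℕ) • (1 : ℤ)) = (n : ℤ) - 1 := by
        simp [nsmul_eq_mul]; push_cast; omega
      omega
    omega
  have hz0 : h z = 0 := by
    rw [hsum2] at hge hle
    nlinarith [hge, hle]
  have hall0 : ∀ j, h j = 0 := by
    intro j
    have h0 : ∑ j : Fin n, (h j - h z) = 0 := by rw [hsum2, hz0]; ring
    have := (Finset.sum_eq_zero_iff_of_nonneg hnonneg).mp h0 j (mem_univ j)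
    omega
  refine ⟨?_, hall0⟩
  have hσmono : StrictMono (σ : Fin n → Fin n) := by
    intro i j hij
    rcases hstep i j hij with ⟨hc, _⟩ | ⟨_, e⟩
    · exact hc
    · rw [hall0 i, hall0 j] at e; omega
  refine Equiv.ext fun j => ?_
  have : ((StrictMono.orderIsoOfSurjective (σ : Fin n → Fin n) hσmono σ.surjective j : Fin n) : ℕ)
      = (j : ℕ) := Fin.coe_orderIso_apply _ j
  exact Fin.ext this
end

section
/- Fix n ≥ 1 and x = (x_0, …, x_{n−1}) ∈ ℝ^n. Then, as y = (y_0, …, y_{n−1}) → 0 along vectors with pairwise distinct coordinates, det[ e^{x_j y_k} ]_{j,k=0}^{n−1} / Δ(y) converges to (∏_{j=0}^{n−1} 1/j!) · Δ(x), where Δ(x) = ∏_{0 ≤ j < k ≤ n−1} (x_k − x_j) is the Vandermonde determinant. -/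
open Finset

/-- The Vandermonde product `Δ(x) = ∏_{j<k} (x_k − x_j)`. -/
noncomputable def vand {n : ℕ} (x : Fin n → ℝ) : ℝ :=
  ∏ j : Fin n, ∏ k ∈ Finset.univ.filter (fun k => j < k), (x k - x j)

namespace Stmt8
open Polynomial intervalIntegral

noncomputable def L (x : ℝ) (k : ℕ) (y : ℕ → ℝ) : ℝ :=
  ∑ i ∈ range (k+1), Real.exp (x * y i) * ∏ l ∈ (range (k+1)).erase i, (y i - y l)⁻¹

noncomputable def I (x : ℝ) : ℕ → (ℕ → ℝ) → ℝ
  | 0, y => Real.exp (x * y 0)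
  | (k+1), y => x * ∫ s in (0:ℝ)..1, s ^ k * I x k (fun i => y 0 + s * (y (i+1) - y 0))

lemma leadingCoeff_basisDivisor (a b : ℝ) :
    (Lagrange.basisDivisor a b).leadingCoeff = (a - b)⁻¹ := by
  rw [Lagrange.basisDivisor, leadingCoeff_mul, leadingCoeff_C,
    (Polynomial.monic_X_sub_C b).leadingCoeff, mul_one]

lemma sum_inv_prod_eq_zero {k : ℕ} (hk : 1 ≤ k) {y : ℕ → ℝ}
    (hy : Set.InjOn y (range (k+1))) :
    ∑ i ∈ range (k+1), ∏ l ∈ (range (k+1)).erase i, (y i - y l)⁻¹ = 0 := by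
  have h := Lagrange.sum_basis hy ⟨0, by simp⟩
  have h2 := congrArg (fun p => Polynomial.coeff p k) h
  simp only [Polynomial.finset_sum_coeff, Polynomial.coeff_one] at h2
  rw [if_neg (by omega)] at h2
  rw [← h2]
  refine sum_congr rfl fun i hi => ?_
  have hd := Lagrange.natDegree_basis hy hi
  rw [card_range, Nat.add_sub_cancel] at hd
  rw [show (Lagrange.basis (range (k+1)) y i).coeff k
      = (Lagrange.basis (range (k+1)) y i).leadingCoeff by rw [Polynomial.leadingCoeff, hd],
    Lagrange.basis, leadingCoeff_prod]
  exact prod_congr rfl fun l _ => (leadingCoeff_basisDivisor _ _).symm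

lemma I_zero (x : ℝ) : ∀ k : ℕ, I x k (fun _ => 0) = x ^ k / (k.factorial : ℝ) := by
  intro k
  induction k with
  | zero => simp [I]
  | succ k ih =>
    rw [I]
    have : (fun s : ℝ => s ^ k * I x k (fun i => (0:ℝ) + s * ((0:ℝ) - 0)))
        = fun s : ℝ => s ^ k * (x ^ k / (k.factorial : ℝ)) := by
      funext s
      rw [show (fun i : ℕ => (0:ℝ) + s * ((0:ℝ) - 0)) = (fun _ => (0:ℝ)) by funext i; ring, ih]
    rw [this, intervalIntegral.integral_mul_const, integral_pow]
    rw [Nat.factorial_succ]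
    push_cast
    have h1 : (k:ℝ) + 1 ≠ 0 := by positivity
    have h2 : (k.factorial : ℝ) ≠ 0 := by positivity
    field_simp
    ring

lemma I_continuous (x : ℝ) (k : ℕ) : Continuous fun y : ℕ → ℝ => I x k y := by
  induction k with
  | zero => exact Real.continuous_exp.comp (continuous_const.mul (continuous_apply 0))
  | succ k ih =>
    have hz : Continuous fun p : (ℕ → ℝ) × ℝ => (fun i => p.1 0 + p.2 * (p.1 (i+1) - p.1 0)) := by
      refine continuous_pi fun i => ?_
      exact ((continuous_apply 0).comp continuous_fst).add
        (continuous_snd.mul (((continuous_apply (i+1)).comp continuous_fst).sub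
          ((continuous_apply 0).comp continuous_fst)))
    have hF : Continuous (Function.uncurry fun (y : ℕ → ℝ) (s : ℝ) =>
        s ^ k * I x k (fun i => y 0 + s * (y (i+1) - y 0))) := by
      exact (continuous_snd.pow k).mul (ih.comp hz)
    exact continuous_const.mul
      (intervalIntegral.continuous_parametric_intervalIntegral_of_continuous' hF 0 1)

lemma exp_integral (x a d : ℝ) (hd : d ≠ 0) :
    x * ∫ s in (0:ℝ)..1, Real.exp (x * (a + s * d)) =
      (Real.exp (x * (a + d)) - Real.exp (x * a)) / d := by
  rcases eq_or_ne x 0 with rfl | hx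
  · simp
  · have hxd : x * d ≠ 0 := mul_ne_zero hx hd
    have hder : ∀ s ∈ Set.uIcc (0:ℝ) 1,
        HasDerivAt (fun s : ℝ => Real.exp (x * (a + s * d)) / (x * d))
          (Real.exp (x * (a + s * d))) s := by
      intro s _
      have h1 : HasDerivAt (fun s : ℝ => x * (a + s * d)) (x * d) s := by
        simpa using (((hasDerivAt_id s).mul_const d).const_add a).const_mul x
      have h2 := (h1.exp).div_const (x * d)
      simpa [mul_comm, mul_div_assoc, mul_div_cancel_left₀ _ hxd] using h2
    rw [intervalIntegral.integral_eq_sub_of_hasDerivAt hder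
      ((Real.continuous_exp.comp (by continuity)).intervalIntegrable 0 1)]
    field_simp
    ring

lemma I_eq_L (x : ℝ) : ∀ (k : ℕ) (y : ℕ → ℝ),
    Set.InjOn y (range (k+1)) → I x k y = L x k y := by
  intro k
  induction k with
  | zero => intro y _; simp [I, L]
  | succ k ih =>
    intro y hy
    have hmem : ∀ m, m ≤ k+1 → (m : ℕ) ∈ (range (k+2) : Finset ℕ) := by
      intro m hm; exact mem_range.2 (by omega)
    have hyne : ∀ i l, i ≤ k+1 → l ≤ k+1 → i ≠ l → y i ≠ y l := by
      intro i l hi hl hne h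
      exact hne (hy (by simp only [Finset.coe_range, Set.mem_Iio]; omega) (by simp only [Finset.coe_range, Set.mem_Iio]; omega) h)
    set z : ℝ → ℕ → ℝ := fun s i => y 0 + s * (y (i+1) - y 0) with hzdef
    set P : ℕ → ℝ := fun j => ∏ l ∈ (range (k+2)).erase j, (y j - y l)⁻¹ with hPdef
    set c : ℕ → ℝ := fun i => ∏ l ∈ (range (k+1)).erase i, (y (i+1) - y (l+1))⁻¹ with hcdef
    -- Step A: pointwise identity for s in (0,1]
    have key : ∀ s : ℝ, s ∈ Set.Ioc (0:ℝ) 1 →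
        s ^ k * I x k (z s)
          = ∑ i ∈ range (k+1), Real.exp (x * z s i) * c i := by
      intro s hs
      have hs0 : s ≠ 0 := ne_of_gt hs.1
      have hzinj : Set.InjOn (z s) (range (k+1)) := by
        intro a ha b hb hab
        simp only [hzdef] at hab
        have h1 : y (a+1) = y (b+1) := by
          have := mul_left_cancel₀ hs0 (by linarith : s * (y (a+1) - y 0) = s * (y (b+1) - y 0))
          linarith
        simp only [Finset.coe_range, Set.mem_Iio] at ha hb
        by_contra hne
        exact hyne (a+1) (b+1) (by omega) (by omega) (by omega) h1
      rw [ih (z s) hzinj, L, mul_sum]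
      refine sum_congr rfl fun i hi => ?_
      have hcard : ((range (k+1)).erase i).card = k := by
        rw [card_erase_of_mem hi, card_range]; omega
      have hprod : ∏ l ∈ (range (k+1)).erase i, (z s i - z s l)⁻¹
          = (s⁻¹) ^ k * c i := by
        calc ∏ l ∈ (range (k+1)).erase i, (z s i - z s l)⁻¹
            = ∏ l ∈ (range (k+1)).erase i, (s⁻¹ * (y (i+1) - y (l+1))⁻¹) := by
              refine prod_congr rfl fun l _ => ?_
              rw [hzdef]
              rw [show y 0 + s * (y (i+1) - y 0) - (y 0 + s * (y (l+1) - y 0))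
                  = s * (y (i+1) - y (l+1)) from by ring, mul_inv]
          _ = (s⁻¹) ^ k * c i := by rw [prod_mul_distrib, prod_const, hcard, hcdef]
      rw [hprod]
      have hss : s ^ k * (s⁻¹) ^ k = 1 := by
        rw [← mul_pow, mul_inv_cancel₀ hs0, one_pow]
      calc s ^ k * (Real.exp (x * z s i) * ((s⁻¹) ^ k * c i))
          = (s ^ k * (s⁻¹) ^ k) * (Real.exp (x * z s i) * c i) := by ring
        _ = Real.exp (x * z s i) * c i := by rw [hss, one_mul]
    have hne0 : ∀ i ∈ range (k+1), y (i+1) - y 0 ≠ 0 := by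
      intro i hi
      rw [mem_range] at hi
      exact sub_ne_zero.2 (hyne (i+1) 0 (by omega) (by omega) (by omega))
    -- Step B: rewrite the integral using the pointwise identity
    have hI : I x (k+1) y
        = x * ∫ s in (0:ℝ)..1, ∑ i ∈ range (k+1), Real.exp (x * z s i) * c i := by
      rw [I]
      congr 1
      apply intervalIntegral.integral_congr_ae
      refine Filter.Eventually.of_forall fun s hs => ?_
      have hs' : s ∈ Set.Ioc (0:ℝ) 1 := by rwa [Set.uIoc_of_le zero_le_one] at hs
      simpa [hzdef] using key s hs'
    have hInt : ∀ i ∈ range (k+1), IntervalIntegrable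
        (fun s => Real.exp (x * z s i) * c i) MeasureTheory.volume 0 1 := by
      intro i _
      simp only [hzdef]
      exact ((Real.continuous_exp.comp (by continuity)).mul continuous_const).intervalIntegrable 0 1
    rw [hI, intervalIntegral.integral_finset_sum hInt, Finset.mul_sum]
    -- claim 1 : relating the coefficients
    have claim1 : ∀ i ∈ range (k+1), P (i+1) = (y (i+1) - y 0)⁻¹ * c i := by
      intro i hi
      rw [mem_range] at hi
      have hset : (range (k+2)).erase (i+1)
          = insert 0 (((range (k+1)).erase i).image Nat.succ) := by
        ext a
        simp only [mem_erase, mem_range, mem_insert, mem_image, Nat.succ_eq_add_one]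
        constructor
        · rintro ⟨hne, hlt⟩
          match a with
          | 0 => exact Or.inl rfl
          | b+1 => exact Or.inr ⟨b, ⟨by omega, by omega⟩, rfl⟩
        · rintro (rfl | ⟨b, ⟨h1, h2⟩, rfl⟩) <;> omega
      simp only [hPdef, hcdef]
      rw [hset, prod_insert (by simp), prod_image (fun a _ b _ h => Nat.succ_injective h)]
    have claim2 : ∑ i ∈ range (k+1), P (i+1) = -P 0 := by
      have h0 : ∑ j ∈ range (k+2), P j = 0 := by
        simpa [hPdef] using sum_inv_prod_eq_zero (k := k+1) (by omega) hy
      rw [Finset.sum_range_succ'] at h0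
      linarith
    calc ∑ i ∈ range (k+1), x * ∫ s in (0:ℝ)..1, Real.exp (x * z s i) * c i
        = ∑ i ∈ range (k+1),
            (Real.exp (x * y (i+1)) - Real.exp (x * y 0)) * P (i+1) := by
          refine sum_congr rfl fun i hi => ?_
          rw [claim1 i hi]
          simp only [hzdef]
          rw [intervalIntegral.integral_mul_const]
          have hint := exp_integral x (y 0) (y (i+1) - y 0) (hne0 i hi)
          rw [show y 0 + (y (i+1) - y 0) = y (i+1) from by ring] at hint
          rw [← mul_assoc, hint, div_eq_mul_inv, mul_assoc]
      _ = (∑ i ∈ range (k+1), Real.exp (x * y (i+1)) * P (i+1))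
            - (∑ i ∈ range (k+1), P (i+1)) * Real.exp (x * y 0) := by
          rw [Finset.sum_mul, ← Finset.sum_sub_distrib]
          refine sum_congr rfl fun i _ => by ring
      _ = L x (k+1) y := by
          rw [claim2, L]
          conv_rhs => rw [Finset.sum_range_succ']
          simp only [hPdef]
          ring

lemma vand_comm {n : ℕ} (y : Fin n → ℝ) :
    vand y = ∏ k : Fin n, ∏ j ∈ Iio k, (y k - y j) := by
  have hfil : ∀ j : Fin n, univ.filter (fun k => j < k) = Ioi j := by
    intro j; ext k; simp
  calc vand y = ∏ j : Fin n, ∏ k ∈ Ioi j, (y k - y j) := by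
        refine Finset.prod_congr rfl fun j _ => by rw [hfil j]
    _ = ∏ k : Fin n, ∏ j ∈ Iio k, (y k - y j) :=
        Finset.prod_comm' (by intro a b; simp [and_comm])

theorem stmt_8' (n : ℕ) (x : Fin n → ℝ) :
    Filter.Tendsto
      (fun y : Fin n → ℝ =>
        Matrix.det (Matrix.of fun j k : Fin n => Real.exp (x j * y k)) / vand y)
      (nhdsWithin 0 {y : Fin n → ℝ | Function.Injective y})
      (nhds ((∏ j : Fin n, (1 / ((j : ℕ).factorial : ℝ))) * vand x)) := by
  classical
  set e : (Fin n → ℝ) → ℕ → ℝ := fun y i => if h : i < n then y ⟨i, h⟩ else 0 with he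
  have he_coe : ∀ (y : Fin n → ℝ) (i : Fin n), e y (i : ℕ) = y i := by
    intro y i; simp [he, i.isLt]
  have hecont : Continuous e := by
    refine continuous_pi fun i => ?_
    by_cases h : i < n
    · simpa [he, h] using (continuous_apply (⟨i, h⟩ : Fin n))
    · simpa [he, h] using (continuous_const : Continuous fun _ : Fin n → ℝ => (0:ℝ))
  set G : (Fin n → ℝ) → ℝ := fun y =>
    Matrix.det (Matrix.of fun j k : Fin n => I (x j) (k : ℕ) (e y)) with hG
  have hGcont : Continuous G := by
    apply Continuous.matrix_det
    apply continuous_matrix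
    intro j k
    exact (I_continuous (x j) (k : ℕ)).comp hecont
  have he0 : e 0 = fun _ => 0 := by
    funext i; by_cases h : i < n <;> simp [he, h]
  have hG0 : G 0 = (∏ j : Fin n, (1 / ((j : ℕ).factorial : ℝ))) * vand x := by
    rw [hG]
    simp only [he0]
    have hm : (Matrix.of fun j k : Fin n => I (x j) (k:ℕ) (fun _ => 0))
        = (Matrix.vandermonde x) * Matrix.diagonal (fun k : Fin n => (((k:ℕ).factorial : ℝ))⁻¹) := by
      ext j k
      rw [Matrix.mul_diagonal]
      simp [I_zero, Matrix.vandermonde, div_eq_mul_inv]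
    rw [hm, Matrix.det_mul, Matrix.det_diagonal]
    have hv : vand x = (Matrix.vandermonde x).det := by
      rw [Matrix.det_vandermonde, vand]
      refine Finset.prod_congr rfl fun j _ => ?_
      refine Finset.prod_congr ?_ fun _ _ => rfl
      ext k; simp
    rw [hv, mul_comm]
    simp [one_div]
  -- main identity on injective y
  have hmain : ∀ y : Fin n → ℝ, Function.Injective y →
      Matrix.det (Matrix.of fun j k : Fin n => Real.exp (x j * y k)) / vand y = G y := by
    intro y hinj
    have hInjOn : ∀ k : Fin n, Set.InjOn (e y) (range ((k:ℕ)+1)) := by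
      intro k a ha b hb hab
      simp only [Finset.coe_range, Set.mem_Iio] at ha hb
      have hkn : (k:ℕ) < n := k.isLt
      have han : a < n := by omega
      have hbn : b < n := by omega
      have h2 : y ⟨a, han⟩ = y ⟨b, hbn⟩ := by simpa [he, han, hbn] using hab
      simpa using congrArg Fin.val (hinj h2)
    set W : Matrix (Fin n) (Fin n) ℝ := Matrix.of fun i k : Fin n =>
      if (i:ℕ) ≤ (k:ℕ) then ∏ l ∈ (range ((k:ℕ)+1)).erase (i:ℕ), (e y (i:ℕ) - e y l)⁻¹ else 0
      with hW
    have hWtri : W.BlockTriangular id := by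
      intro i k h
      have : (k:ℕ) < (i:ℕ) := h
      simp only [hW, Matrix.of_apply]
      rw [if_neg (by omega)]
    have himg : ∀ k : Fin n, (Iio k).image (Fin.val) = range (k:ℕ) := by
      intro k; ext a
      simp only [mem_image, mem_Iio, mem_range]
      constructor
      · rintro ⟨j, hj, rfl⟩; exact hj
      · intro ha; exact ⟨⟨a, lt_trans ha k.isLt⟩, by simpa [Fin.lt_def] using ha, rfl⟩
    have hdetW : W.det = (vand y)⁻¹ := by
      rw [Matrix.det_of_upperTriangular hWtri]
      have hdiag : ∀ i : Fin n, W i i = ∏ l ∈ range (i:ℕ), (y i - e y l)⁻¹ := by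
        intro i
        simp only [hW, Matrix.of_apply, le_refl, if_true]
        rw [Finset.range_add_one, Finset.erase_insert Finset.notMem_range_self, he_coe]
      rw [Finset.prod_congr rfl fun i _ => hdiag i]
      have hvy : vand y = ∏ k : Fin n, ∏ l ∈ range (k:ℕ), (y k - e y l) := by
        rw [vand_comm]
        refine Finset.prod_congr rfl fun k _ => ?_
        rw [← himg k, Finset.prod_image (fun a _ b _ h => Fin.val_injective h)]
        exact Finset.prod_congr rfl fun j _ => by rw [he_coe]
      rw [hvy]
      simp [Finset.prod_inv_distrib]
    have hEW : (Matrix.of fun j k : Fin n => Real.exp (x j * y k)) * W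
        = Matrix.of fun j k : Fin n => L (x j) (k:ℕ) (e y) := by
      ext j k
      rw [Matrix.mul_apply]
      simp only [Matrix.of_apply, L]
      have hterm : ∀ i : Fin n, Real.exp (x j * y i) * W i k
          = (fun m : ℕ => if m ≤ (k:ℕ) then Real.exp (x j * e y m)
              * ∏ l ∈ (range ((k:ℕ)+1)).erase m, (e y m - e y l)⁻¹ else 0) (i:ℕ) := by
        intro i
        simp only [hW, Matrix.of_apply, he_coe, mul_ite, mul_zero]
      rw [Finset.sum_congr rfl fun i _ => hterm i,
        Fin.sum_univ_eq_sum_range (fun m : ℕ => if m ≤ (k:ℕ) then Real.exp (x j * e y m)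
              * ∏ l ∈ (range ((k:ℕ)+1)).erase m, (e y m - e y l)⁻¹ else 0) n]
      rw [← Finset.sum_filter]
      refine Finset.sum_congr ?_ fun _ _ => rfl
      ext a
      simp only [mem_filter, mem_range]
      have := k.isLt
      omega
    rw [div_eq_mul_inv, ← hdetW, ← Matrix.det_mul, hEW, hG]
    congr 1
    ext j k
    exact (I_eq_L (x j) (k:ℕ) (e y) (hInjOn k)).symm
  have hT : Filter.Tendsto G (nhdsWithin 0 {y : Fin n → ℝ | Function.Injective y})
      (nhds (G 0)) := (hGcont.tendsto 0).mono_left nhdsWithin_le_nhds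
  rw [hG0] at hT
  refine Filter.Tendsto.congr' ?_ hT
  exact Filter.eventuallyEq_of_mem self_mem_nhdsWithin fun y hy => (hmain y hy).symm


end Stmt8

/-- As `y → 0` along vectors with pairwise distinct coordinates,
`det[e^{x_j y_k}] / Δ(y) → (∏_j 1/j!) Δ(x)`. -/
theorem stmt_8 (n : ℕ) (hn : 1 ≤ n) (x : Fin n → ℝ) :
    Filter.Tendsto
      (fun y : Fin n → ℝ =>
        Matrix.det (Matrix.of fun j k : Fin n => Real.exp (x j * y k)) / vand y)
      (nhdsWithin 0 {y : Fin n → ℝ | Function.Injective y})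
      (nhds ((∏ j : Fin n, (1 / ((j : ℕ).factorial : ℝ))) * vand x)) :=
  Stmt8.stmt_8' n x
end

section
/- Let p(x) = (1/√(2π)) e^{−x²/2}, let M > 0, let n ≥ 1, and let a = (a_{jk})_{j,k=0}^{n−1} be a real n × n matrix. Then Σ det[ p(a_{jk} + h_k M) ]_{j,k=0}^{n−1}, the sum over all (h_0, …, h_{n−1}) ∈ ℤ^n with h_0 + ⋯ + h_{n−1} = 0, equals (M/(2π)) ∫_0^{2π/M} det[ g(a_{jk}, θ) ]_{j,k=0}^{n−1} dθ, where g(x, θ) = Σ_{h ∈ ℤ} p(x + hM) e^{iMhθ}; all series converge absolutely. -/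
open Finset MeasureTheory

/-- The standard Gaussian density. -/
noncomputable def gaussDen (x : ℝ) : ℝ :=
  (1 / Real.sqrt (2 * Real.pi)) * Real.exp (-x ^ 2 / 2)

/-- The theta-type kernel `g(x, θ) = Σ_{h∈ℤ} p(x + hM) e^{iMhθ}`. -/
noncomputable def thetaKer (M x θ : ℝ) : ℂ :=
  ∑' h : ℤ, (gaussDen (x + h * M) : ℂ) * Complex.exp (Complex.I * M * h * θ)

lemma gaussDen_nonneg (x : ℝ) : 0 ≤ gaussDen x := by
  unfold gaussDen; positivity

lemma summable_gauss {M : ℝ} (hM : 0 < M) (x : ℝ) :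
    Summable fun h : ℤ => gaussDen (x + h * M) := by
  unfold gaussDen
  apply Summable.mul_left
  have hr0 : (0:ℝ) ≤ Real.exp (-(M^2)/4) := Real.exp_nonneg _
  have hr1 : Real.exp (-(M^2)/4) < 1 := by
    apply Real.exp_lt_one_iff.mpr; nlinarith
  have hbound : ∀ h : ℤ, Real.exp (-(x + h*M)^2/2) ≤
      Real.exp (x^2/2) * Real.exp (-(M^2)/4) ^ h.natAbs := by
    intro h
    rw [← Real.exp_nat_mul, ← Real.exp_add]
    apply Real.exp_le_exp.mpr
    have h1 : (h.natAbs : ℝ) ≤ (h:ℝ)^2 := by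
      have h2 : h.natAbs ≤ h.natAbs ^ 2 := Nat.le_self_pow (by norm_num) _
      calc (h.natAbs : ℝ) ≤ ((h.natAbs : ℝ))^2 := by exact_mod_cast h2
        _ = (h:ℝ)^2 := by rw [Nat.cast_natAbs, Int.cast_abs, sq_abs]
    nlinarith [sq_nonneg ((x + h*M) + x), sq_nonneg ((x + h*M) - x), sq_nonneg (x + h*M)]
  apply Summable.of_nonneg_of_le (fun h => Real.exp_nonneg _) hbound
  apply Summable.of_nat_of_neg
  · simpa using (summable_geometric_of_lt_one hr0 hr1).mul_left (Real.exp (x^2/2))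
  · simpa using (summable_geometric_of_lt_one hr0 hr1).mul_left (Real.exp (x^2/2))

lemma norm_term (M x θ : ℝ) (h : ℤ) :
    ‖(gaussDen (x + h * M) : ℂ) * Complex.exp (Complex.I * M * h * θ)‖
      = gaussDen (x + h * M) := by
  rw [norm_mul]
  have h1 : Complex.I * M * h * θ = ((M * h * θ : ℝ) : ℂ) * Complex.I := by
    push_cast; ring
  rw [h1, Complex.norm_real, Real.norm_of_nonneg (gaussDen_nonneg _),
    Complex.norm_exp_ofReal_mul_I, mul_one]

lemma norm_exp_int (M θ : ℝ) (c : ℤ) :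
    ‖Complex.exp (Complex.I * M * c * θ)‖ = 1 := by
  have h1 : Complex.I * M * c * θ = ((M * c * θ : ℝ) : ℂ) * Complex.I := by
    push_cast; ring
  rw [h1, Complex.norm_exp_ofReal_mul_I]

lemma cons_prod_eq {n : ℕ} (c : Fin (n+1) → ℤ → ℂ) (z : ℤ × (Fin n → ℤ)) :
    c 0 z.1 * ∏ k : Fin n, c k.succ (z.2 k)
      = ∏ k, c k ((Fin.consEquiv fun _ => ℤ) z k) := by
  rw [Fin.prod_univ_succ]
  simp [Fin.consEquiv]

lemma pi_summable_norm : ∀ (n : ℕ) (c : Fin n → ℤ → ℂ), (∀ k, Summable fun h => ‖c k h‖) →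
    Summable (fun h : Fin n → ℤ => ‖∏ k, c k (h k)‖) := by
  intro n
  induction n with
  | zero => intro c _; exact .of_finite
  | succ n ih =>
    intro c hc
    apply ((Fin.consEquiv (fun _ : Fin (n+1) => ℤ)).summable_iff).mp
    exact ((Summable.mul_norm (hc 0) (ih (fun k => c k.succ) (fun k => hc k.succ))).congr
      (fun z => by rw [Function.comp_apply, ← cons_prod_eq c z, norm_mul]))

lemma pi_tsum_prod : ∀ (n : ℕ) (c : Fin n → ℤ → ℂ), (∀ k, Summable fun h => ‖c k h‖) →
    (∏ k, ∑' h : ℤ, c k h) = ∑' h : Fin n → ℤ, ∏ k, c k (h k) := by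
  intro n
  induction n with
  | zero =>
    intro c _
    simp only [Finset.univ_eq_empty, Finset.prod_empty]
    exact (tsum_eq_single (f := fun _ : Fin 0 → ℤ => (1:ℂ)) default
      (fun b hb => absurd (Subsingleton.elim b default) hb)).symm
  | succ n ih =>
    intro c hc
    rw [← (Fin.consEquiv (fun _ : Fin (n+1) => ℤ)).tsum_eq, Fin.prod_univ_succ,
      ih (fun k => c k.succ) (fun k => hc k.succ),
      tsum_mul_tsum_of_summable_norm (hc 0)
        (pi_summable_norm n (fun k => c k.succ) (fun k => hc k.succ))]
    exact tsum_congr (fun z => cons_prod_eq c z)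

/-- The constrained reflection sum of Gaussian determinants equals
`(M/2π) ∫_0^{2π/M} det[g(a_{jk}, θ)] dθ`; all series converge absolutely. -/
theorem stmt_10 (M : ℝ) (hM : 0 < M) (n : ℕ) (hn : 1 ≤ n) (a : Fin n → Fin n → ℝ) :
    (∀ x θ : ℝ, Summable (fun h : ℤ =>
      ‖(gaussDen (x + h * M) : ℂ) * Complex.exp (Complex.I * M * h * θ)‖)) ∧
    Summable (fun h : {h : Fin n → ℤ // ∑ j, h j = 0} =>
      |Matrix.det (Matrix.of fun j k : Fin n => gaussDen (a j k + (h.1 k : ℝ) * M))|) ∧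
    ((∑' h : {h : Fin n → ℤ // ∑ j, h j = 0},
        Matrix.det (Matrix.of fun j k : Fin n => gaussDen (a j k + (h.1 k : ℝ) * M)) : ℝ) : ℂ)
      = ((M / (2 * Real.pi) : ℝ) : ℂ) *
        ∫ θ in (0 : ℝ)..(2 * Real.pi / M),
          Matrix.det (Matrix.of fun j k : Fin n => thetaKer M (a j k) θ) := by
  have hπ : (0:ℝ) < Real.pi := Real.pi_pos
  have hM0 : (M:ℂ) ≠ 0 := by exact_mod_cast hM.ne'
  set T : ℝ := 2 * Real.pi / M with hTdef
  have hT : 0 < T := by positivity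
  -- part 1
  have part1 : ∀ x θ : ℝ, Summable (fun h : ℤ =>
      ‖(gaussDen (x + h * M) : ℂ) * Complex.exp (Complex.I * M * h * θ)‖) := by
    intro x θ
    exact (summable_gauss hM x).congr (fun h => (norm_term M x θ h).symm)
  set D : (Fin n → ℤ) → ℝ := fun h =>
    Matrix.det (Matrix.of fun j k : Fin n => gaussDen (a j k + (h k : ℝ) * M)) with hDdef
  have hnormreal : ∀ (y : ℝ), ‖((y:ℝ):ℂ)‖ = |y| := fun y => by
    rw [Complex.norm_real, Real.norm_eq_abs]
  have hprod : ∀ σ : Equiv.Perm (Fin n),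
      Summable fun h : Fin n → ℤ => ∏ k, gaussDen (a (σ k) k + (h k) * M) := by
    intro σ
    have hsum : ∀ k : Fin n, Summable fun hh : ℤ =>
        ‖((gaussDen (a (σ k) k + hh * M) : ℝ) : ℂ)‖ := by
      intro k
      refine (summable_gauss hM (a (σ k) k)).congr (fun hh => ?_)
      rw [hnormreal, abs_of_nonneg (gaussDen_nonneg _)]
    refine (pi_summable_norm n _ hsum).congr (fun h => ?_)
    rw [show ∏ k, ((gaussDen (a (σ k) k + h k * M) : ℝ) : ℂ)
        = ((∏ k, gaussDen (a (σ k) k + h k * M) : ℝ) : ℂ) by push_cast; rfl,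
      hnormreal, abs_of_nonneg (Finset.prod_nonneg fun k _ => gaussDen_nonneg _)]
  have hDabs : Summable fun h : Fin n → ℤ => |D h| := by
    refine Summable.of_nonneg_of_le (fun h => abs_nonneg _) ?_
      (summable_sum (s := Finset.univ) (fun σ _ => hprod σ))
    intro h
    simp only [hDdef]
    rw [Matrix.det_apply']
    refine (Finset.abs_sum_le_sum_abs _ _).trans (Finset.sum_le_sum fun σ _ => ?_)
    rw [abs_mul]
    have hsgn : |((Equiv.Perm.sign σ : ℤ) : ℝ)| = 1 := by
      rcases Int.units_eq_one_or (Equiv.Perm.sign σ) with hs | hs <;> simp [hs]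
    rw [hsgn, one_mul]
    simp only [Matrix.of_apply]
    rw [abs_of_nonneg (Finset.prod_nonneg fun k _ => gaussDen_nonneg _)]
  refine ⟨part1, hDabs.subtype _, ?_⟩
  set Dc : (Fin n → ℤ) → ℂ := fun h => ((D h : ℝ) : ℂ) with hDcdef
  have hDc : ∀ h : Fin n → ℤ, Dc h = ∑ σ : Equiv.Perm (Fin n),
      ((Equiv.Perm.sign σ : ℤ) : ℂ) * ∏ k, ((gaussDen (a (σ k) k + h k * M) : ℝ) : ℂ) := by
    intro h
    have h0 : Dc h = Complex.ofRealHom (D h) := rfl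
    rw [h0]
    simp only [hDdef]
    rw [RingHom.map_det, Matrix.det_apply']
    refine Finset.sum_congr rfl fun σ _ => ?_
    simp [Matrix.map_apply, Matrix.of_apply]
  have hE : ∀ (θ : ℝ) (h : Fin n → ℤ), (∏ k, Complex.exp (Complex.I * M * (h k) * θ))
      = Complex.exp (Complex.I * M * ((∑ j, h j : ℤ) : ℂ) * θ) := by
    intro θ h
    rw [← Complex.exp_sum]
    congr 1
    rw [← Finset.sum_mul, ← Finset.mul_sum]
    push_cast
    ring
  have hdet : ∀ θ : ℝ, (Matrix.of fun j k : Fin n => thetaKer M (a j k) θ).det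
      = ∑' h : Fin n → ℤ, Dc h * Complex.exp (Complex.I * M * ((∑ j, h j : ℤ) : ℂ) * θ) := by
    intro θ
    have hterm : ∀ σ : Equiv.Perm (Fin n),
        (∏ k, Matrix.of (fun j k : Fin n => thetaKer M (a j k) θ) (σ k) k)
          = ∑' h : Fin n → ℤ, ∏ k,
              ((gaussDen (a (σ k) k + h k * M) : ℝ) : ℂ)
                * Complex.exp (Complex.I * M * (h k) * θ) := by
      intro σ
      simp only [Matrix.of_apply, thetaKer]
      exact pi_tsum_prod n (fun k hh => (gaussDen (a (σ k) k + hh * M) : ℂ)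
        * Complex.exp (Complex.I * M * hh * θ)) (fun k => part1 (a (σ k) k) θ)
    have hSσ : ∀ σ : Equiv.Perm (Fin n), Summable fun h : Fin n → ℤ =>
        ((Equiv.Perm.sign σ : ℤ) : ℂ) * ∏ k,
          ((gaussDen (a (σ k) k + h k * M) : ℝ) : ℂ)
            * Complex.exp (Complex.I * M * (h k) * θ) := by
      intro σ
      exact ((pi_summable_norm n (fun k hh => (gaussDen (a (σ k) k + hh * M) : ℂ)
        * Complex.exp (Complex.I * M * hh * θ))
        (fun k => part1 (a (σ k) k) θ)).of_norm).mul_left _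
    rw [Matrix.det_apply']
    calc (∑ σ : Equiv.Perm (Fin n), ((Equiv.Perm.sign σ : ℤ) : ℂ)
            * ∏ k, Matrix.of (fun j k : Fin n => thetaKer M (a j k) θ) (σ k) k)
        = ∑ σ : Equiv.Perm (Fin n), ∑' h : Fin n → ℤ,
            ((Equiv.Perm.sign σ : ℤ) : ℂ) * ∏ k,
              ((gaussDen (a (σ k) k + h k * M) : ℝ) : ℂ)
                * Complex.exp (Complex.I * M * (h k) * θ) := by
          refine Finset.sum_congr rfl fun σ _ => ?_
          rw [hterm σ, tsum_mul_left]
      _ = ∑' h : Fin n → ℤ, ∑ σ : Equiv.Perm (Fin n),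
            ((Equiv.Perm.sign σ : ℤ) : ℂ) * ∏ k,
              ((gaussDen (a (σ k) k + h k * M) : ℝ) : ℂ)
                * Complex.exp (Complex.I * M * (h k) * θ) :=
          (Summable.tsum_finsetSum (fun σ _ => hSσ σ)).symm
      _ = ∑' h : Fin n → ℤ, Dc h
            * Complex.exp (Complex.I * M * ((∑ j, h j : ℤ) : ℂ) * θ) := by
          refine tsum_congr fun h => ?_
          rw [hDc h, Finset.sum_mul]
          refine Finset.sum_congr rfl fun σ _ => ?_
          rw [Finset.prod_mul_distrib, hE θ h]
          ring
  have hJ : ∀ c : ℤ, (∫ θ in Set.Ioc (0:ℝ) T, Complex.exp (Complex.I * M * (c:ℂ) * θ))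
      = if c = 0 then (T:ℂ) else 0 := by
    intro c
    rw [← intervalIntegral.integral_of_le hT.le]
    by_cases hc : c = 0
    · subst hc; simp
    · rw [if_neg hc]
      have hz : Complex.I * M * (c:ℂ) ≠ 0 :=
        mul_ne_zero (mul_ne_zero Complex.I_ne_zero hM0) (by exact_mod_cast hc)
      rw [integral_exp_mul_complex hz]
      have h1 : Complex.I * M * (c:ℂ) * (T:ℂ) = (c:ℂ) * (2 * (Real.pi:ℂ) * Complex.I) := by
        rw [hTdef]
        push_cast
        field_simp
      rw [h1, Complex.exp_int_mul_two_pi_mul_I, Complex.ofReal_zero, mul_zero,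
        Complex.exp_zero, sub_self, zero_div]
  have hInt : ∀ h : Fin n → ℤ, Integrable
      (fun θ : ℝ => Dc h * Complex.exp (Complex.I * M * ((∑ j, h j : ℤ) : ℂ) * θ))
      (volume.restrict (Set.Ioc (0:ℝ) T)) := by
    intro h
    apply Continuous.integrableOn_Ioc
    exact continuous_const.mul (Complex.continuous_exp.comp
      (continuous_const.mul Complex.continuous_ofReal))
  have hNorm : Summable fun h : Fin n → ℤ =>
      ∫ θ in Set.Ioc (0:ℝ) T, ‖Dc h * Complex.exp (Complex.I * M * ((∑ j, h j : ℤ) : ℂ) * θ)‖ := by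
    have heq : (fun h : Fin n → ℤ => ∫ θ in Set.Ioc (0:ℝ) T,
        ‖Dc h * Complex.exp (Complex.I * M * ((∑ j, h j : ℤ) : ℂ) * θ)‖)
        = fun h : Fin n → ℤ => |D h| * T := by
      funext h
      have hptw : ∀ θ : ℝ, ‖Dc h * Complex.exp (Complex.I * M * ((∑ j, h j : ℤ) : ℂ) * θ)‖
          = |D h| := by
        intro θ
        rw [norm_mul, norm_exp_int M θ (∑ j, h j), mul_one, hDcdef, hnormreal]
      simp only [hptw]
      rw [setIntegral_const, Real.volume_real_Ioc_of_le hT.le, smul_eq_mul, mul_comm]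
      congr 1
      ring
    rw [heq]
    exact hDabs.mul_right T
  have hswap : (∫ θ in (0:ℝ)..T, (Matrix.of fun j k : Fin n => thetaKer M (a j k) θ).det)
      = ∑' h : Fin n → ℤ, Dc h *
          ∫ θ in Set.Ioc (0:ℝ) T, Complex.exp (Complex.I * M * ((∑ j, h j : ℤ) : ℂ) * θ) := by
    rw [intervalIntegral.integral_of_le hT.le]
    simp only [hdet]
    rw [← integral_tsum_of_summable_integral_norm hInt hNorm]
    exact tsum_congr fun h => integral_const_mul _ _
  have hsupp : Function.support (fun h : Fin n → ℤ =>
      if (∑ j, h j) = 0 then Dc h * (T:ℂ) else 0) ⊆ {h : Fin n → ℤ | ∑ j, h j = 0} := by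
    intro h hh
    simp only [Function.mem_support] at hh
    by_contra hcon
    exact hh (if_neg hcon)
  have hkey : (∫ θ in (0:ℝ)..T, (Matrix.of fun j k : Fin n => thetaKer M (a j k) θ).det)
      = (∑' h : {h : Fin n → ℤ // ∑ j, h j = 0}, Dc h.1) * (T:ℂ) := by
    rw [hswap]
    have : (fun h : Fin n → ℤ => Dc h *
        ∫ θ in Set.Ioc (0:ℝ) T, Complex.exp (Complex.I * M * ((∑ j, h j : ℤ) : ℂ) * θ))
        = fun h : Fin n → ℤ => if (∑ j, h j) = 0 then Dc h * (T:ℂ) else 0 := by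
      funext h
      rw [hJ (∑ j, h j)]
      by_cases hc : (∑ j, h j) = 0
      · rw [if_pos hc, if_pos hc]
      · rw [if_neg hc, if_neg hc, mul_zero]
    rw [this, ← tsum_subtype_eq_of_support_subset hsupp, ← tsum_mul_right]
    exact tsum_congr fun h => if_pos h.2
  have hcoef : ((M / (2 * Real.pi) : ℝ) : ℂ) * (T:ℂ) = 1 := by
    rw [hTdef, ← Complex.ofReal_mul, ← Complex.ofReal_one]
    congr 1
    field_simp
  calc ((∑' h : {h : Fin n → ℤ // ∑ j, h j = 0},
        Matrix.det (Matrix.of fun j k : Fin n => gaussDen (a j k + (h.1 k : ℝ) * M)) : ℝ) : ℂ)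
      = ∑' h : {h : Fin n → ℤ // ∑ j, h j = 0}, Dc h.1 := Complex.ofReal_tsum _
    _ = ((M / (2 * Real.pi) : ℝ) : ℂ) *
        ((∑' h : {h : Fin n → ℤ // ∑ j, h j = 0}, Dc h.1) * (T:ℂ)) := by
          rw [show ((M / (2 * Real.pi) : ℝ) : ℂ) *
            ((∑' h : {h : Fin n → ℤ // ∑ j, h j = 0}, Dc h.1) * (T:ℂ))
            = (((M / (2 * Real.pi) : ℝ) : ℂ) * (T:ℂ))
              * (∑' h : {h : Fin n → ℤ // ∑ j, h j = 0}, Dc h.1) by ring, hcoef, one_mul]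
    _ = ((M / (2 * Real.pi) : ℝ) : ℂ) *
        ∫ θ in (0 : ℝ)..T, (Matrix.of fun j k : Fin n => thetaKer M (a j k) θ).det := by
          rw [hkey]
end

section
/- Let T > 0, let M be a positive integer, let x be an integer, and let s ∈ ℂ with |s| = 1. Then Σ_{h ∈ ℤ} p_T(x + hM) s^h = (e^{−T}/M) Σ_{z ∈ ℂ : z^M = s} z^{−x} e^{(T/2)(z + z^{−1})}, where p_T(k) = e^{−T} (1/(2π)) ∫_0^{2π} e^{−ikθ} e^{T cos θ} dθ and the series on the left converges absolutely. -/
open Complex MeasureTheory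

namespace Stmt12

noncomputable def g (T : ℝ) (p : ℕ × ℕ) : ℝ :=
  (T / 2) ^ p.1 / p.1.factorial * ((T / 2) ^ p.2 / p.2.factorial)

lemma g_nonneg {T : ℝ} (hT : 0 ≤ T) (p : ℕ × ℕ) : 0 ≤ g T p := by
  have h2 : (0:ℝ) ≤ T / 2 := by linarith
  unfold g; positivity

lemma summable_g {T : ℝ} (hT : 0 ≤ T) : Summable (g T) := by
  have h := Real.summable_pow_div_factorial (T / 2)
  have h2 := h.mul_of_nonneg h (fun n => by positivity) (fun n => by positivity)
  exact h2

lemma hasSum_exp_pair (u v : ℂ) :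
    HasSum (fun p : ℕ × ℕ => u ^ p.1 / (p.1.factorial : ℂ) * (v ^ p.2 / (p.2.factorial : ℂ)))
      (Complex.exp u * Complex.exp v) := by
  have hu : HasSum (fun n : ℕ => u ^ n / (n.factorial : ℂ)) (Complex.exp u) := by
    rw [Complex.exp_eq_exp_ℂ]; exact NormedSpace.expSeries_div_hasSum_exp u
  have hv : HasSum (fun n : ℕ => v ^ n / (n.factorial : ℂ)) (Complex.exp v) := by
    rw [Complex.exp_eq_exp_ℂ]; exact NormedSpace.expSeries_div_hasSum_exp v
  have hsum : Summable (fun p : ℕ × ℕ =>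
      (fun n : ℕ => u ^ n / (n.factorial : ℂ)) p.1 *
      (fun n : ℕ => v ^ n / (n.factorial : ℂ)) p.2) := by
    apply Summable.of_norm
    have hsu : Summable (fun n : ℕ => ‖u ^ n / (n.factorial : ℂ)‖) := by
      have h := Real.summable_pow_div_factorial ‖u‖
      apply Summable.congr h
      intro n
      simp [norm_div, norm_pow]
    have hsv : Summable (fun n : ℕ => ‖v ^ n / (n.factorial : ℂ)‖) := by
      have h := Real.summable_pow_div_factorial ‖v‖
      apply Summable.congr h
      intro n
      simp [norm_div, norm_pow]
    have h2 := hsu.mul_of_nonneg hsv (fun n => norm_nonneg _) (fun n => norm_nonneg _)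
    apply Summable.congr h2
    intro p
    simp [norm_mul]
  have h3 := hu.mul hv hsum
  exact h3


lemma hasSum_f (T : ℝ) (x : ℤ) {z : ℂ} (hz : z ≠ 0) :
    HasSum (fun p : ℕ × ℕ => ((g T p : ℝ) : ℂ) * z ^ ((p.1 : ℤ) - p.2 - x))
      (z ^ (-x) * Complex.exp ((T / 2 : ℂ) * (z + z⁻¹))) := by
  have h0 : (T / 2 : ℂ) * (z + z⁻¹) = (T / 2 : ℂ) * z + (T / 2 : ℂ) * z⁻¹ := by ring
  rw [h0, Complex.exp_add]
  have h := (hasSum_exp_pair ((T / 2 : ℂ) * z) ((T / 2 : ℂ) * z⁻¹)).mul_left (z ^ (-x))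
  have key : (fun p : ℕ × ℕ => ((g T p : ℝ) : ℂ) * z ^ ((p.1 : ℤ) - p.2 - x))
      = fun p : ℕ × ℕ => z ^ (-x) *
        (((T / 2 : ℂ) * z) ^ p.1 / (p.1.factorial : ℂ) *
          (((T / 2 : ℂ) * z⁻¹) ^ p.2 / (p.2.factorial : ℂ))) := by
    funext p
    obtain ⟨a, b⟩ := p
    have hz1 : z ^ ((a : ℤ) - b - x) = z ^ (a : ℕ) * (z ^ (b : ℕ))⁻¹ * z ^ (-x) := by
      rw [← zpow_natCast z a, ← zpow_natCast z b, ← zpow_neg, ← zpow_add₀ hz, ← zpow_add₀ hz]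
      congr 1
    have ha : ((a.factorial : ℂ)) ≠ 0 := Nat.cast_ne_zero.2 a.factorial_ne_zero
    have hb : ((b.factorial : ℂ)) ≠ 0 := Nat.cast_ne_zero.2 b.factorial_ne_zero
    simp only [g]
    push_cast
    rw [hz1, mul_pow, mul_pow, inv_pow]
    have hzb : (z : ℂ) ^ (b : ℕ) ≠ 0 := pow_ne_zero _ hz
    field_simp
  rw [key]
  exact h

lemma integral_exp_eq (m : ℤ) :
    ∫ θ in (0:ℝ)..(2 * Real.pi), Complex.exp (Complex.I * m * θ) =
      if m = 0 then ((2 * Real.pi : ℝ) : ℂ) else 0 := by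
  rcases eq_or_ne m 0 with rfl | hm
  · simp
  · rw [if_neg hm]
    have hc : Complex.I * m ≠ 0 := mul_ne_zero Complex.I_ne_zero (by exact_mod_cast hm)
    have h := integral_exp_mul_complex (a := 0) (b := 2 * Real.pi) hc
    have h2 : (fun x : ℝ => Complex.exp (Complex.I * m * x))
        = fun x : ℝ => Complex.exp (Complex.I * m * x) := rfl
    rw [show (fun θ : ℝ => Complex.exp (Complex.I * m * θ))
        = fun θ : ℝ => Complex.exp ((Complex.I * m) * θ) from rfl]
    rw [h]
    have h3 : Complex.I * m * ((2 * Real.pi : ℝ) : ℂ) = (m : ℂ) * (2 * (Real.pi : ℂ) * Complex.I) := by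
      push_cast
      ring
    rw [h3, Complex.exp_int_mul_two_pi_mul_I]
    simp


lemma pT_eq (T : ℝ) (hT : 0 < T) (k : ℤ) :
    (((Real.exp (-T) / (2 * Real.pi) : ℝ)) : ℂ) *
      ∫ θ in (0:ℝ)..(2 * Real.pi),
        Complex.exp (-Complex.I * k * θ) * Real.exp (T * Real.cos θ)
    = (Real.exp (-T) : ℂ) *
      ∑' p : ℕ × ℕ, (if ((p.1 : ℤ) - p.2 = k) then ((g T p : ℝ) : ℂ) else 0) := by
  classical
  set term : ℕ × ℕ → ℝ → ℂ := fun p θ =>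
    ((g T p : ℝ) : ℂ) * Complex.exp (Complex.I * (((p.1 : ℤ) - p.2 - k : ℤ) : ℂ) * θ) with hterm
  have hpoint : ∀ θ : ℝ, HasSum (fun p => term p θ)
      (Complex.exp (-Complex.I * k * θ) * (Real.exp (T * Real.cos θ) : ℂ)) := by
    intro θ
    have hcos : ((Real.exp (T * Real.cos θ) : ℝ) : ℂ)
        = Complex.exp ((T / 2 : ℂ) * Complex.exp (Complex.I * θ)) *
          Complex.exp ((T / 2 : ℂ) * Complex.exp (-(Complex.I * θ))) := by
      rw [← Complex.exp_add]
      rw [Complex.ofReal_exp]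
      congr 1
      have e1 : Complex.exp (Complex.I * θ) = Complex.cos θ + Complex.sin θ * Complex.I := by
        rw [mul_comm]; exact Complex.exp_mul_I _
      have e2 : Complex.exp (-(Complex.I * θ)) = Complex.cos θ - Complex.sin θ * Complex.I := by
        rw [show -(Complex.I * (θ : ℂ)) = ((-θ : ℝ) : ℂ) * Complex.I by push_cast; ring]
        rw [Complex.exp_mul_I]
        push_cast
        rw [Complex.cos_neg, Complex.sin_neg]
        ring
      rw [e1, e2]
      push_cast [Complex.ofReal_cos]
      ring
    rw [hcos]
    have h := (hasSum_exp_pair ((T / 2 : ℂ) * Complex.exp (Complex.I * θ))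
      ((T / 2 : ℂ) * Complex.exp (-(Complex.I * θ)))).mul_left
        (Complex.exp (-Complex.I * k * θ))
    have key : (fun p : ℕ × ℕ => term p θ) = fun p =>
        Complex.exp (-Complex.I * k * θ) *
          (((T / 2 : ℂ) * Complex.exp (Complex.I * θ)) ^ p.1 / (p.1.factorial : ℂ) *
           (((T / 2 : ℂ) * Complex.exp (-(Complex.I * θ))) ^ p.2 / (p.2.factorial : ℂ))) := by
      funext p
      obtain ⟨a, b⟩ := p
      simp only [term, g, mul_pow]
      rw [← Complex.exp_nat_mul, ← Complex.exp_nat_mul]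
      rw [show Complex.I * (((a : ℤ) - b - k : ℤ) : ℂ) * θ
          = (a : ℂ) * (Complex.I * θ) + ((b : ℂ) * (-(Complex.I * θ)) + (-Complex.I * k * θ)) by
        push_cast; ring]
      rw [Complex.exp_add, Complex.exp_add]
      push_cast
      ring
    rw [key]
    exact h
  have hle : (0:ℝ) ≤ 2 * Real.pi := by positivity
  have hnorm_term : ∀ p θ, ‖term p θ‖ = g T p := by
    intro p θ
    simp only [term]
    rw [norm_mul]
    have h1 : ‖Complex.exp (Complex.I * (((p.1 : ℤ) - p.2 - k : ℤ) : ℂ) * θ)‖ = 1 := by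
      rw [Complex.norm_exp]
      have h0 : (Complex.I * (((p.1 : ℤ) - p.2 - k : ℤ) : ℂ) * (θ : ℂ)).re = 0 := by
        simp [Complex.mul_re, Complex.mul_im]
      rw [h0, Real.exp_zero]
    rw [h1, mul_one, Complex.norm_real, Real.norm_eq_abs, _root_.abs_of_nonneg (g_nonneg hT.le p)]
  have hnnnorm_term : ∀ p θ, ‖term p θ‖₊ = ‖g T p‖₊ := by
    intro p θ
    apply NNReal.coe_injective
    rw [coe_nnnorm, coe_nnnorm, hnorm_term p θ, Real.norm_eq_abs,
      _root_.abs_of_nonneg (g_nonneg hT.le p)]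
  have hmeas : ∀ p : ℕ × ℕ,
      AEStronglyMeasurable (term p) (volume.restrict (Set.Ioc (0:ℝ) (2 * Real.pi))) := by
    intro p
    apply Continuous.aestronglyMeasurable
    simp only [term]
    fun_prop
  have hs1 : Summable (fun p : ℕ × ℕ => ‖g T p‖) := by
    apply Summable.congr (summable_g hT.le)
    intro p
    symm
    rw [Real.norm_eq_abs, _root_.abs_of_nonneg (g_nonneg hT.le p)]
  have hs2 : Summable (fun p : ℕ × ℕ => ‖g T p‖₊) :=
    NNReal.summable_coe.1 (hs1.congr fun p => (coe_nnnorm _).symm)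
  have hlint : ∑' p : ℕ × ℕ,
      ∫⁻ θ, ‖term p θ‖₊ ∂(volume.restrict (Set.Ioc (0:ℝ) (2 * Real.pi))) ≠ ⊤ := by
    have heval : ∀ p : ℕ × ℕ,
        ∫⁻ θ, ‖term p θ‖₊ ∂(volume.restrict (Set.Ioc (0:ℝ) (2 * Real.pi)))
        = (‖g T p‖₊ : ENNReal) * ENNReal.ofReal (2 * Real.pi) := by
      intro p
      have hfun : (fun θ => (‖term p θ‖₊ : ENNReal)) = fun _ => (‖g T p‖₊ : ENNReal) :=
        funext fun θ => by rw [hnnnorm_term p θ]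
      rw [hfun, MeasureTheory.lintegral_const, Measure.restrict_apply_univ, Real.volume_Ioc,
        sub_zero]
    rw [tsum_congr heval, ENNReal.tsum_mul_right]
    exact ENNReal.mul_ne_top (ENNReal.tsum_coe_ne_top_iff_summable.2 hs2) ENNReal.ofReal_ne_top
  rw [intervalIntegral.integral_of_le hle]
  have hint_eq : ∀ θ : ℝ, Complex.exp (-Complex.I * k * θ) * ((Real.exp (T * Real.cos θ) : ℝ) : ℂ)
      = ∑' p : ℕ × ℕ, term p θ := fun θ => (hpoint θ).tsum_eq.symm
  simp only [hint_eq]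
  rw [MeasureTheory.integral_tsum hmeas hlint]
  have hterm_int : ∀ p : ℕ × ℕ, ∫ θ in Set.Ioc (0:ℝ) (2 * Real.pi), term p θ
      = ((g T p : ℝ) : ℂ) *
        (if ((p.1 : ℤ) - p.2 - k) = 0 then ((2 * Real.pi : ℝ) : ℂ) else 0) := by
    intro p
    rw [← intervalIntegral.integral_of_le hle]
    simp only [term]
    rw [intervalIntegral.integral_const_mul, integral_exp_eq]
  rw [tsum_congr hterm_int]
  have h4 : ∀ p : ℕ × ℕ, ((g T p : ℝ) : ℂ) *
        (if ((p.1 : ℤ) - p.2 - k) = 0 then ((2 * Real.pi : ℝ) : ℂ) else 0)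
      = ((2 * Real.pi : ℝ) : ℂ) * (if ((p.1 : ℤ) - p.2 = k) then ((g T p : ℝ) : ℂ) else 0) := by
    intro p
    by_cases hc : (p.1 : ℤ) - p.2 - k = 0
    · rw [if_pos hc, if_pos (by omega), mul_comm]
    · rw [if_neg hc, if_neg (by omega), mul_zero, mul_zero]
  rw [tsum_congr h4, tsum_mul_left, ← mul_assoc]
  congr 1
  have h5 : (Real.exp (-T) / (2 * Real.pi)) * (2 * Real.pi) = Real.exp (-T) :=
    div_mul_cancel₀ _ (by positivity)
  rw [← Complex.ofReal_mul, h5]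


lemma roots_pow_sum (M : ℕ) (hM : 0 < M) {s z₀ ζ : ℂ} (hz0 : z₀ ^ M = s)
    (hζ : IsPrimitiveRoot ζ M) (m : ℤ) :
    ∑ j ∈ Finset.range M, (ζ ^ j * z₀) ^ m
      = if (M : ℤ) ∣ m then (M : ℂ) * s ^ (m / M) else 0 := by
  classical
  have hterm : ∀ j ∈ Finset.range M, (ζ ^ j * z₀) ^ m = (ζ ^ m) ^ j * z₀ ^ m := by
    intro j _
    rw [mul_zpow]
    congr 1
    rw [← zpow_natCast ζ j, ← zpow_mul, mul_comm ((j : ℤ)) m, zpow_mul, zpow_natCast]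
  rw [Finset.sum_congr rfl hterm, ← Finset.sum_mul]
  by_cases hdvd : (M : ℤ) ∣ m
  · obtain ⟨c, rfl⟩ := hdvd
    rw [if_pos ⟨c, rfl⟩]
    have h1 : ζ ^ ((M : ℤ) * c) = 1 := by
      rw [zpow_mul, zpow_natCast, hζ.pow_eq_one, one_zpow]
    have h2 : z₀ ^ ((M : ℤ) * c) = s ^ c := by
      rw [zpow_mul, zpow_natCast, hz0]
    have h3 : ((M : ℤ) * c) / (M : ℤ) = c :=
      Int.mul_ediv_cancel_left c (by exact_mod_cast hM.ne')
    rw [h1, h2, h3]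
    simp [Finset.sum_const, Finset.card_range]
  · rw [if_neg hdvd]
    have hne : ζ ^ m ≠ 1 := fun h => hdvd ((hζ.zpow_eq_one_iff_dvd m).1 h)
    rw [geom_sum_eq hne]
    have h1 : (ζ ^ m) ^ M = 1 := by
      rw [← zpow_natCast (ζ ^ m) M, ← zpow_mul, mul_comm m ((M : ℤ)), zpow_mul, zpow_natCast,
        hζ.pow_eq_one, one_zpow]
    rw [h1, sub_self, zero_div, zero_mul]


end Stmt12

open Stmt12 in
/-- For `|s| = 1`, `Σ_{h∈ℤ} p_T(x + hM) s^h` converges absolutely and equals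
`(e^{−T}/M) Σ_{z^M = s} z^{−x} e^{(T/2)(z + z⁻¹)}`, the sum on the right being over the `M`
distinct complex `M`-th roots of `s`. -/
theorem stmt_12 (T : ℝ) (hT : 0 < T) (M : ℕ) (hM : 0 < M) (x : ℤ)
    (s : ℂ) (hs : ‖s‖ = 1)
    (pT : ℤ → ℂ)
    (hpT : ∀ k : ℤ, pT k = ((Real.exp (-T) / (2 * Real.pi) : ℝ) : ℂ) *
      ∫ θ in (0 : ℝ)..(2 * Real.pi),
        Complex.exp (-Complex.I * k * θ) * Real.exp (T * Real.cos θ)) :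
    Summable (fun h : ℤ => ‖pT (x + h * M) * s ^ h‖) ∧
    (∑' h : ℤ, pT (x + h * M) * s ^ h)
      = ((Real.exp (-T) : ℂ) / (M : ℂ)) *
        ((Polynomial.nthRoots M s).map
          (fun z => z ^ (-x) * Complex.exp ((T / 2 : ℂ) * (z + z⁻¹)))).sum := by
  classical
  have hs0 : s ≠ 0 := by intro h; rw [h] at hs; simp at hs
  have hMC : ((M : ℂ)) ≠ 0 := Nat.cast_ne_zero.2 hM.ne'
  have hMZ : ((M : ℤ)) ≠ 0 := by exact_mod_cast hM.ne'
  have hpTF : ∀ k : ℤ, pT k = (Real.exp (-T) : ℂ) *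
      ∑' p : ℕ × ℕ, (if ((p.1 : ℤ) - p.2 = k) then ((g T p : ℝ) : ℂ) else 0) := by
    intro k; rw [hpT k]; exact pT_eq T hT k
  set GR : ℕ × ℕ → ℝ := fun p => if (M : ℤ) ∣ ((p.1 : ℤ) - p.2 - x) then g T p else 0 with hGRdef
  set GC : ℕ × ℕ → ℂ := fun p => if (M : ℤ) ∣ ((p.1 : ℤ) - p.2 - x)
      then ((g T p : ℝ) : ℂ) * s ^ (((p.1 : ℤ) - p.2 - x) / M) else 0 with hGCdef
  set q : ℕ × ℕ → ℤ := fun p => ((p.1 : ℤ) - p.2 - x) / M with hqdef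
  have habs_s : ∀ n : ℤ, ‖s ^ n‖ = 1 := fun n => by
    rw [norm_zpow, hs, one_zpow]
  have hGCnorm : ∀ p, ‖GC p‖ = GR p := by
    intro p
    simp only [GC, GR]
    by_cases hd : (M : ℤ) ∣ ((p.1 : ℤ) - p.2 - x)
    · rw [if_pos hd, if_pos hd, norm_mul, habs_s, mul_one, Complex.norm_real,
        Real.norm_eq_abs, _root_.abs_of_nonneg (g_nonneg hT.le p)]
    · rw [if_neg hd, if_neg hd, norm_zero]
  have hGRsum : Summable GR := by
    apply Summable.of_nonneg_of_le _ _ (summable_g hT.le)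
    · intro p
      simp only [GR]
      split
      · exact g_nonneg hT.le p
      · exact le_rfl
    · intro p
      simp only [GR]
      split
      · exact le_rfl
      · exact g_nonneg hT.le p
  have hGCsum : Summable GC := Summable.of_norm (hGRsum.congr fun p => (hGCnorm p).symm)
  have hfib := hGCsum.hasSum.tsum_fiberwise q
  have hfibR := hGRsum.hasSum.tsum_fiberwise q
  have hfiber_eq : ∀ h : ℤ, (∑' p : (q ⁻¹' {h} : Set (ℕ × ℕ)), GC p)
      = (∑' p : ℕ × ℕ, (if ((p.1 : ℤ) - p.2 = x + h * M) then ((g T p : ℝ) : ℂ) else 0))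
        * s ^ h := by
    intro h
    rw [tsum_subtype, ← tsum_mul_right]
    apply tsum_congr
    intro p
    rw [ite_mul, zero_mul]
    by_cases hd : (M : ℤ) ∣ ((p.1 : ℤ) - p.2 - x)
    · obtain ⟨c, hc⟩ := hd
      have hqp : q p = c := by simp only [q]; rw [hc, Int.mul_ediv_cancel_left _ hMZ]
      by_cases hch : c = h
      · subst hch
        have hmem : p ∈ q ⁻¹' {c} := by simp [Set.mem_preimage, hqp]
        rw [Set.indicator_of_mem hmem]
        have hcond : (p.1 : ℤ) - p.2 = x + c * M := by linear_combination hc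
        rw [if_pos hcond]
        simp only [GC]
        rw [if_pos ⟨c, hc⟩, hc, Int.mul_ediv_cancel_left _ hMZ]
      · have hnm : p ∉ q ⁻¹' {h} := by simp [Set.mem_preimage, hqp, hch]
        rw [Set.indicator_of_notMem hnm]
        rw [if_neg ?_]
        intro hcon
        apply hch
        have h1 : (M : ℤ) * c = (M : ℤ) * h := by linear_combination hcon - hc
        exact mul_left_cancel₀ hMZ h1
    · have hGC0 : GC p = 0 := by simp only [GC]; rw [if_neg hd]
      have hind : Set.indicator (q ⁻¹' {h}) GC p = 0 := by
        by_cases hm : p ∈ q ⁻¹' {h}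
        · rw [Set.indicator_of_mem hm, hGC0]
        · rw [Set.indicator_of_notMem hm]
      rw [hind, if_neg fun hcon => hd ⟨h, by linear_combination hcon⟩]
  have hLS : HasSum (fun h : ℤ => pT (x + h * M) * s ^ h)
      ((Real.exp (-T) : ℂ) * ∑' p, GC p) := by
    have h2 := hfib.mul_left ((Real.exp (-T) : ℂ))
    have hfun : (fun h : ℤ => (Real.exp (-T) : ℂ) * ∑' p : (q ⁻¹' {h} : Set (ℕ × ℕ)), GC p)
        = fun h : ℤ => pT (x + h * M) * s ^ h := by
      funext h
      rw [hfiber_eq h, hpTF (x + h * M)]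
      ring
    rw [← hfun]
    exact h2
  have hnorm_le : ∀ h : ℤ, ‖pT (x + h * M) * s ^ h‖
      ≤ Real.exp (-T) * ∑' p : (q ⁻¹' {h} : Set (ℕ × ℕ)), GR p := by
    intro h
    have he : pT (x + h * M) * s ^ h
        = (Real.exp (-T) : ℂ) * ∑' p : (q ⁻¹' {h} : Set (ℕ × ℕ)), GC p := by
      rw [hfiber_eq h, hpTF (x + h * M)]; ring
    rw [he, norm_mul, Complex.norm_real, Real.norm_eq_abs,
      _root_.abs_of_nonneg (Real.exp_pos _).le]
    apply mul_le_mul_of_nonneg_left _ (Real.exp_pos _).le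
    have hsub : Summable (fun p : (q ⁻¹' {h} : Set (ℕ × ℕ)) => ‖GC p‖) := by
      have h3 := hGRsum.subtype (q ⁻¹' {h})
      apply h3.congr
      intro p
      exact (hGCnorm p.1).symm
    calc ‖∑' p : (q ⁻¹' {h} : Set (ℕ × ℕ)), GC p‖
        ≤ ∑' p : (q ⁻¹' {h} : Set (ℕ × ℕ)), ‖GC p‖ := norm_tsum_le_tsum_norm hsub
      _ = ∑' p : (q ⁻¹' {h} : Set (ℕ × ℕ)), GR p := tsum_congr fun p => hGCnorm p
  have hsummableNorm : Summable (fun h : ℤ => ‖pT (x + h * M) * s ^ h‖) := by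
    apply Summable.of_nonneg_of_le (fun h => norm_nonneg _) hnorm_le
    exact hfibR.summable.mul_left _
  -- roots side
  set z₀ : ℂ := Complex.exp (Complex.log s / M) with hz₀def
  have hz0 : z₀ ^ M = s := by
    rw [hz₀def, ← Complex.exp_nat_mul]
    have hdiv : (M : ℂ) * (Complex.log s / M) = Complex.log s := by field_simp
    rw [hdiv, Complex.exp_log hs0]
  have hz0ne : z₀ ≠ 0 := Complex.exp_ne_zero _
  obtain ⟨ζ, hζ⟩ : ∃ ζ : ℂ, IsPrimitiveRoot ζ M := ⟨_, Complex.isPrimitiveRoot_exp M hM.ne'⟩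
  have hζne : ζ ≠ 0 := by
    intro h0
    have h1 := hζ.pow_eq_one
    rw [h0, zero_pow hM.ne'] at h1
    exact zero_ne_one h1
  have hroots : Polynomial.nthRoots M s = (Multiset.range M).map fun j => ζ ^ j * z₀ :=
    hζ.nthRoots_eq hz0
  have hzne : ∀ j : ℕ, ζ ^ j * z₀ ≠ 0 := fun j => mul_ne_zero (pow_ne_zero _ hζne) hz0ne
  have hroot_sum : ∀ j : ℕ, HasSum
      (fun p : ℕ × ℕ => ((g T p : ℝ) : ℂ) * (ζ ^ j * z₀) ^ ((p.1 : ℤ) - p.2 - x))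
      ((ζ ^ j * z₀) ^ (-x) * Complex.exp ((T / 2 : ℂ) * ((ζ ^ j * z₀) + (ζ ^ j * z₀)⁻¹))) :=
    fun j => hasSum_f T x (hzne j)
  have hmap : ((Polynomial.nthRoots M s).map
        (fun z => z ^ (-x) * Complex.exp ((T / 2 : ℂ) * (z + z⁻¹)))).sum
      = ∑ j ∈ Finset.range M,
          ((ζ ^ j * z₀) ^ (-x) * Complex.exp ((T / 2 : ℂ) * ((ζ ^ j * z₀) + (ζ ^ j * z₀)⁻¹))) := by
    rw [hroots, Multiset.map_map, ← Finset.range_val, ← Finset.sum_eq_multiset_sum]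
    rfl
  have hswap : ∑ j ∈ Finset.range M,
        ((ζ ^ j * z₀) ^ (-x) * Complex.exp ((T / 2 : ℂ) * ((ζ ^ j * z₀) + (ζ ^ j * z₀)⁻¹)))
      = ∑' p : ℕ × ℕ, ∑ j ∈ Finset.range M,
          ((g T p : ℝ) : ℂ) * (ζ ^ j * z₀) ^ ((p.1 : ℤ) - p.2 - x) := by
    have h1 : ∀ j ∈ Finset.range M,
        ((ζ ^ j * z₀) ^ (-x) * Complex.exp ((T / 2 : ℂ) * ((ζ ^ j * z₀) + (ζ ^ j * z₀)⁻¹)))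
        = ∑' p : ℕ × ℕ, ((g T p : ℝ) : ℂ) * (ζ ^ j * z₀) ^ ((p.1 : ℤ) - p.2 - x) :=
      fun j _ => (hroot_sum j).tsum_eq.symm
    rw [Finset.sum_congr rfl h1, ← Summable.tsum_finsetSum fun j _ => (hroot_sum j).summable]
  have hinner : ∀ p : ℕ × ℕ, ∑ j ∈ Finset.range M,
        ((g T p : ℝ) : ℂ) * (ζ ^ j * z₀) ^ ((p.1 : ℤ) - p.2 - x)
      = (M : ℂ) * GC p := by
    intro p
    rw [← Finset.mul_sum, roots_pow_sum M hM hz0 hζ ((p.1 : ℤ) - p.2 - x)]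
    simp only [GC]
    by_cases hd : (M : ℤ) ∣ ((p.1 : ℤ) - p.2 - x)
    · rw [if_pos hd, if_pos hd]; ring
    · rw [if_neg hd, if_neg hd, mul_zero, mul_zero]
  refine ⟨hsummableNorm, ?_⟩
  rw [hLS.tsum_eq, hmap, hswap, tsum_congr hinner, tsum_mul_left]
  field_simp
end

section
/- The function u ↦ u² − (2/π) ∫_{−√2}^{√2} log|u − s| · √(2 − s²) ds is constant on the open interval (−√2, √2). -/
open Real MeasureTheory intervalIntegral Set

noncomputable section

namespace Stmt13

def g (x : ℝ) : ℝ := Real.log |Real.sin x|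

lemma ae_ne (c : ℝ) : ∀ᵐ x : ℝ ∂volume, x ≠ c := by
  rw [MeasureTheory.ae_iff]
  have : {a : ℝ | ¬a ≠ c} = {c} := by ext x; simp [not_not]
  rw [this]; exact measure_singleton c

lemma g_meas : Measurable g :=
  Real.measurable_log.comp (Real.continuous_sin.measurable.abs)

lemma intervalIntegrable_log01 : IntervalIntegrable Real.log volume 0 1 := by
  have hcont : ContinuousOn (fun x : ℝ => x - x * Real.log x) (Icc 0 1) :=
    (continuous_id.sub Real.continuous_mul_log).continuousOn
  have hderiv : ∀ x ∈ Ioo (0:ℝ) 1,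
      HasDerivAt (fun x : ℝ => x - x * Real.log x) (-Real.log x) x := by
    intro x hx
    have h1 := Real.hasDerivAt_mul_log (ne_of_gt hx.1)
    have h2 := (hasDerivAt_id x).sub h1
    exact h2.congr_deriv (by ring)
  have hpos : ∀ x ∈ Ioo (0:ℝ) 1, 0 ≤ -Real.log x := by
    intro x hx
    have : Real.log x ≤ 0 := Real.log_nonpos hx.1.le hx.2.le
    linarith
  have h := integrableOn_deriv_of_nonneg hcont hderiv hpos
  rw [intervalIntegrable_iff_integrableOn_Ioc_of_le (by norm_num)]
  have h2 := h.neg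
  have : (fun x : ℝ => - -Real.log x) = Real.log := by funext x; ring
  rw [← this]
  exact h2

lemma intervalIntegrable_log_zero (b : ℝ) (hb : 1 ≤ b) :
    IntervalIntegrable Real.log volume 0 b := by
  refine intervalIntegrable_log01.trans (intervalIntegrable_log ?_)
  rw [Set.uIcc_of_le hb, Set.mem_Icc]
  intro h
  linarith [h.1]

/-- integrability of `log |sin|` on `[0, π/2]` -/
lemma gInt_half : IntervalIntegrable g volume 0 (π / 2) := by
  have hπ := Real.pi_gt_three
  have hF : IntervalIntegrable (fun x => Real.log (π/2) - Real.log x) volume 0 (π/2) := by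
    exact (intervalIntegrable_const (c := _)).sub (intervalIntegrable_log_zero _ (by linarith))
  refine hF.mono_fun (g_meas.aestronglyMeasurable) ?_
  filter_upwards [ae_restrict_mem measurableSet_uIoc] with x hx
  rw [Set.uIoc_of_le (by positivity)] at hx
  have hx0 : 0 < x := hx.1
  have hx2 : x ≤ π / 2 := hx.2
  have hsin_pos : 0 < Real.sin x := Real.sin_pos_of_pos_of_lt_pi hx0 (by linarith)
  have hsin_le : Real.sin x ≤ 1 := Real.sin_le_one x
  have hlow : 2 / π * x ≤ Real.sin x := Real.mul_le_sin hx0.le hx2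
  have hxlow : 0 < 2 / π * x := by positivity
  have h1 : Real.log (2 / π * x) ≤ Real.log (Real.sin x) := Real.log_le_log hxlow hlow
  have h2 : Real.log (Real.sin x) ≤ 0 := Real.log_nonpos hsin_pos.le hsin_le
  have h3 : Real.log (2 / π * x) = Real.log x - Real.log (π/2) := by
    rw [Real.log_mul (by positivity) (ne_of_gt hx0)]
    rw [show (2:ℝ)/π = (π/2)⁻¹ by field_simp, Real.log_inv]
    ring
  have hgx : g x = Real.log (Real.sin x) := by
    unfold g; rw [abs_of_pos hsin_pos]
  have hF_nonneg : 0 ≤ Real.log (π/2) - Real.log x := by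
    have : Real.log x ≤ Real.log (π/2) := by
      rcases le_or_gt x 1 with h | h
      · exact (Real.log_nonpos hx0.le h).trans (Real.log_nonneg (by linarith))
      · exact Real.log_le_log (by linarith) hx2
    linarith
  simp only [Real.norm_eq_abs]
  rw [hgx, abs_of_nonpos h2, abs_of_nonneg hF_nonneg]
  linarith [h1, h3.symm.le]


lemma g_neg (x : ℝ) : g (-x) = g x := by simp [g]

lemma g_pi_sub (x : ℝ) : g (π - x) = g x := by simp [g]

lemma g_add_pi (x : ℝ) : g (x + π) = g x := by
  simp [g, Real.sin_add_pi]

lemma g_periodic : Function.Periodic g π := g_add_pi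

lemma gInt_second : IntervalIntegrable g volume (π / 2) π := by
  have h2 := ((IntervalIntegrable.iff_comp_neg).mp gInt_half)
  have h3 := h2.comp_add_right (-π)
  have heq : (fun x => g (-(x + -π))) = g := by
    funext x
    rw [show -(x + -π) = π - x by ring, g_pi_sub]
  rw [heq] at h3
  rw [show (-0 : ℝ) - -π = π by ring, show -(π/2) - -π = π/2 by ring] at h3
  exact h3.symm

lemma gInt0pi : IntervalIntegrable g volume 0 π := gInt_half.trans gInt_second

lemma gIntNeg : IntervalIntegrable g volume (-(π / 2)) 0 := by
  have h3 := gInt_second.comp_add_right π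
  have heq : (fun x => g (x + π)) = g := by funext x; exact g_add_pi x
  rw [heq] at h3
  rw [show π/2 - π = -(π/2) by ring, sub_self] at h3
  exact h3

lemma gIntFull : IntervalIntegrable g volume (-(π / 2)) π := gIntNeg.trans gInt0pi

lemma gInt (a b : ℝ) (ha : -(π/2) ≤ a) (ha' : a ≤ π) (hb : -(π/2) ≤ b) (hb' : b ≤ π) :
    IntervalIntegrable g volume a b := by
  refine gIntFull.mono_set ?_
  rw [Set.uIcc_of_le (by linarith [Real.pi_pos] : -(π/2) ≤ π)]
  exact Set.uIcc_subset_Icc ⟨ha, ha'⟩ ⟨hb, hb'⟩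

lemma hcosInt : IntervalIntegrable (fun x => g (π/2 - x)) volume 0 (π/2) := by
  have h2' := ((IntervalIntegrable.iff_comp_neg).mp gInt_half).comp_add_right (-(π/2))
  have heq : (fun x => g (-(x + -(π/2)))) = fun x => g (π/2 - x) := by
    funext x; rw [show -(x + -(π/2)) = π/2 - x by ring]
  rw [heq] at h2'
  rw [show (-0 : ℝ) - -(π/2) = π/2 by ring, show -(π/2) - -(π/2) = 0 by ring] at h2'
  exact h2'.symm

/-- Euler's integral -/
lemma euler : ∫ x in (0:ℝ)..π, g x = -π * Real.log 2 := by
  have hπ := Real.pi_pos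
  set J := ∫ x in (0:ℝ)..(π/2), g x with hJ
  have h1 : ∫ x in (π/2:ℝ)..π, g x = J := by
    have h := intervalIntegral.integral_comp_sub_left (a := (0:ℝ)) (b := π/2) g π
    simp only [g_pi_sub] at h
    rw [show π - π/2 = π/2 by ring, sub_zero] at h
    exact h.symm
  have htot : ∫ x in (0:ℝ)..π, g x = 2 * J := by
    rw [← intervalIntegral.integral_add_adjacent_intervals gInt_half gInt_second, h1]
    ring
  have h2 : ∫ x in (0:ℝ)..(π/2), g (2 * x) = J := by
    rw [intervalIntegral.integral_comp_mul_left (a := (0:ℝ)) (b := π/2) g two_ne_zero]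
    rw [show (2:ℝ) * 0 = 0 by ring, show (2:ℝ) * (π/2) = π by ring, htot, smul_eq_mul]
    ring
  have h3 : ∫ x in (0:ℝ)..(π/2), g (π/2 - x) = J := by
    have h := intervalIntegral.integral_comp_sub_left (a := (0:ℝ)) (b := π/2) g (π/2)
    rw [h, show π/2 - π/2 = 0 by ring, sub_zero]
  have h4 : ∫ x in (0:ℝ)..(π/2), g (2 * x)
      = ∫ x in (0:ℝ)..(π/2), (Real.log 2 + g x + g (π/2 - x)) := by
    refine intervalIntegral.integral_congr_ae ?_
    filter_upwards [ae_ne (π/2)] with x hx hmem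
    rw [Set.uIoc_of_le (by positivity)] at hmem
    have hx0 : 0 < x := hmem.1
    have hx2 : x < π/2 := lt_of_le_of_ne hmem.2 hx
    have hsin : 0 < Real.sin x := Real.sin_pos_of_pos_of_lt_pi hx0 (by linarith)
    have hcos : 0 < Real.cos x := Real.cos_pos_of_mem_Ioo ⟨by linarith, hx2⟩
    have : g (2*x) = Real.log (2 * Real.sin x * Real.cos x) := by
      unfold g
      rw [Real.sin_two_mul, abs_of_pos (by positivity)]
    rw [this, Real.log_mul (by positivity) (ne_of_gt hcos),
      Real.log_mul (by norm_num) (ne_of_gt hsin)]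
    unfold g
    rw [Real.sin_pi_div_two_sub, abs_of_pos hsin, abs_of_pos hcos]
  have h5 : J = π/2 * Real.log 2 + J + J := by
    nth_rewrite 1 [← h2]
    rw [h4, intervalIntegral.integral_add
        ((intervalIntegrable_const (c := _)).add gInt_half) hcosInt,
      intervalIntegral.integral_add (intervalIntegrable_const (c := _)) gInt_half,
      intervalIntegral.integral_const, h3]
    simp only [smul_eq_mul, sub_zero]
    rfl
  have hJval : J = -(π/2) * Real.log 2 := by linarith
  rw [htot, hJval]; ring


lemma gcosInt : IntervalIntegrable (fun x => g x * Real.cos (4*x)) volume 0 π :=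
  gInt0pi.mul_continuousOn (Real.continuous_cos.comp (continuous_const.mul continuous_id)).continuousOn

lemma gsinInt : IntervalIntegrable (fun x => g x * Real.sin (4*x)) volume 0 π :=
  gInt0pi.mul_continuousOn (Real.continuous_sin.comp (continuous_const.mul continuous_id)).continuousOn

lemma sin4pi : Real.sin (4*π) = 0 := by
  rw [show (4:ℝ)*π = 2*π + 2*π by ring, Real.sin_add, Real.sin_two_pi, Real.cos_two_pi]; ring

lemma cos4pi : Real.cos (4*π) = 1 := by
  rw [show (4:ℝ)*π = 2*π + 2*π by ring, Real.cos_add, Real.sin_two_pi, Real.cos_two_pi]; ring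

lemma cos_quad (x : ℝ) : Real.cos (4*x) = 8*(Real.cos x)^4 - 8*(Real.cos x)^2 + 1 := by
  rw [show (4:ℝ)*x = 2*(2*x) by ring, Real.cos_two_mul, Real.cos_two_mul]; ring

/-- `∫₀^π (2 cos⁴ - cos²) = π/4` -/
lemma poly_int : ∫ x in (0:ℝ)..π, (2*(Real.cos x)^4 - (Real.cos x)^2) = π/4 := by
  have h4 : ∫ x in (0:ℝ)..π, (Real.cos x)^4 = 3*π/8 := by
    have := integral_cos_pow (a := (0:ℝ)) (b := π) 2
    rw [integral_cos_sq] at this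
    simp [Real.sin_pi, Real.cos_pi] at this
    rw [this]; norm_num; ring
  have h2 : ∫ x in (0:ℝ)..π, (Real.cos x)^2 = π/2 := by
    rw [integral_cos_sq]; simp [Real.sin_pi]
  have hi4 : IntervalIntegrable (fun x => 2*(Real.cos x)^4) volume 0 π :=
    (Continuous.intervalIntegrable (by continuity) _ _)
  have hi2 : IntervalIntegrable (fun x => (Real.cos x)^2) volume 0 π :=
    (Continuous.intervalIntegrable (by continuity) _ _)
  rw [intervalIntegral.integral_sub hi4 hi2, intervalIntegral.integral_const_mul, h4, h2]
  ring

/-- the hard Fourier coefficient -/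
lemma A4 : ∫ x in (0:ℝ)..π, g x * Real.cos (4*x) = -(π/4) := by
  have hπ := Real.pi_pos
  set H : ℝ → ℝ := fun x => (|Real.sin x| * Real.log |Real.sin x|) * (2*(Real.cos x)^3 - Real.cos x)
    with hH
  have hcont : ContinuousOn H (Icc 0 π) := by
    apply Continuous.continuousOn
    exact (Real.continuous_mul_log.comp (Real.continuous_sin.abs)).mul (by continuity)
  have hderiv : ∀ x ∈ Ioo (0:ℝ) π,
      HasDerivAt H (g x * Real.cos (4*x) + (2*(Real.cos x)^4 - (Real.cos x)^2)) x := by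
    intro x hx
    have hsin : 0 < Real.sin x := Real.sin_pos_of_pos_of_lt_pi hx.1 hx.2
    set F : ℝ → ℝ := fun y => (Real.sin y * Real.log (Real.sin y)) * (2*(Real.cos y)^3 - Real.cos y)
      with hF
    have hev : ∀ᶠ y in nhds x, 0 < Real.sin y :=
      (Real.continuous_sin.continuousAt (x := x)).eventually (eventually_gt_nhds hsin)
    have hev2 : H =ᶠ[nhds x] F := by
      filter_upwards [hev] with y hy
      simp only [hH, hF, abs_of_pos hy]
    have hA : HasDerivAt (fun y => Real.sin y * Real.log (Real.sin y))
        ((Real.log (Real.sin x) + 1) * Real.cos x) x := by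
      have := (Real.hasDerivAt_mul_log (ne_of_gt hsin)).comp x (Real.hasDerivAt_sin x)
      simpa [Function.comp_def] using this
    have hB : HasDerivAt (fun y => 2*(Real.cos y)^3 - Real.cos y)
        (2*(3*(Real.cos x)^2*(-Real.sin x)) - (-Real.sin x)) x := by
      have hc := Real.hasDerivAt_cos x
      have := ((hc.pow 3).const_mul 2).sub hc
      simpa [Pi.sub_def] using this
    have hF' := hA.mul hB
    have hHF := hF'.congr_of_eventuallyEq hev2
    refine hHF.congr_deriv (Eq.symm ?_)
    rw [cos_quad]
    have hg : g x = Real.log (Real.sin x) := by unfold g; rw [abs_of_pos hsin]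
    rw [hg]
    linear_combination (-(Real.log (Real.sin x)) * (1 - 6*(Real.cos x)^2)) *
      (Real.sin_sq_add_cos_sq x)
  have hpolyInt : IntervalIntegrable (fun x => 2*(Real.cos x)^4 - (Real.cos x)^2) volume 0 π :=
    Continuous.intervalIntegrable (by continuity) _ _
  have hftc := intervalIntegral.integral_eq_sub_of_hasDeriv_right_of_le hπ.le hcont
      (fun x hx => (hderiv x hx).hasDerivWithinAt) (gcosInt.add hpolyInt)
  have hH0 : H 0 = 0 := by simp [hH]
  have hHπ : H π = 0 := by simp [hH]
  rw [hH0, hHπ] at hftc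
  rw [intervalIntegral.integral_add gcosInt hpolyInt, poly_int] at hftc
  linarith

lemma B4 : ∫ x in (0:ℝ)..π, g x * Real.sin (4*x) = 0 := by
  have h := intervalIntegral.integral_comp_sub_left (a := (0:ℝ)) (b := π)
      (fun x => g x * Real.sin (4*x)) π
  rw [show π - π = (0:ℝ) by ring, sub_zero] at h
  have heq : ∀ x : ℝ, g (π - x) * Real.sin (4*(π - x)) = -(g x * Real.sin (4*x)) := by
    intro x
    rw [g_pi_sub, show (4:ℝ)*(π-x) = 4*π - 4*x by ring, Real.sin_sub, sin4pi, cos4pi]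
    ring
  simp only [heq] at h
  rw [intervalIntegral.integral_neg] at h
  linarith

lemma Wint (t : ℝ) : ∫ x in (0:ℝ)..π, g x * (1 - Real.cos (4*x - t))
    = -π * Real.log 2 + π/4 * Real.cos t := by
  have heq : ∀ x : ℝ, g x * (1 - Real.cos (4*x - t))
      = g x - (Real.cos t * (g x * Real.cos (4*x)) + Real.sin t * (g x * Real.sin (4*x))) := by
    intro x; rw [Real.cos_sub]; ring
  simp only [heq]
  rw [intervalIntegral.integral_sub gInt0pi ((gcosInt.const_mul _).add (gsinInt.const_mul _)),
    intervalIntegral.integral_add (gcosInt.const_mul _) (gsinInt.const_mul _),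
    intervalIntegral.integral_const_mul, intervalIntegral.integral_const_mul, euler, A4, B4]
  ring




lemma main_formula (φ : ℝ) (hφ0 : 0 < φ) (hφπ : φ < π) :
    ∫ θ in (0:ℝ)..π,
      Real.log |Real.sqrt 2 * Real.cos φ - Real.sqrt 2 * Real.cos θ| * (2 * (Real.sin θ)^2)
    = π * (Real.cos φ)^2 - π/2 - π/2 * Real.log 2 := by
  have hπ := Real.pi_pos
  have hs2 : (0:ℝ) < Real.sqrt 2 := Real.sqrt_pos.2 (by norm_num)
  set c₀ : ℝ := Real.log (2 * Real.sqrt 2) with hc₀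
  set W : ℝ → ℝ := fun x => g x * (1 - Real.cos (4*x - 2*φ)) with hW
  -- Step 1: a.e. rewriting of the integrand
  have step1 : ∫ θ in (0:ℝ)..π,
        Real.log |Real.sqrt 2 * Real.cos φ - Real.sqrt 2 * Real.cos θ| * (2 * (Real.sin θ)^2)
      = ∫ θ in (0:ℝ)..π,
        ((c₀ + g ((θ+φ)/2) + g ((θ-φ)/2)) * (1 - Real.cos (2*θ))) := by
    refine intervalIntegral.integral_congr_ae ?_
    filter_upwards [ae_ne φ] with θ hθ hmem
    rw [Set.uIoc_of_le hπ.le] at hmem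
    have hθ0 : 0 < θ := hmem.1
    have hθπ : θ ≤ π := hmem.2
    have hs1 : 0 < Real.sin ((θ+φ)/2) :=
      Real.sin_pos_of_pos_of_lt_pi (by linarith) (by linarith)
    have hs2' : Real.sin ((θ-φ)/2) ≠ 0 := by
      rcases lt_or_gt_of_ne hθ with h | h
      · have : Real.sin ((φ-θ)/2) > 0 :=
          Real.sin_pos_of_pos_of_lt_pi (by linarith) (by linarith)
        rw [show (θ-φ)/2 = -((φ-θ)/2) by ring, Real.sin_neg]
        exact neg_ne_zero.2 (ne_of_gt this)
      · exact ne_of_gt (Real.sin_pos_of_pos_of_lt_pi (by linarith) (by linarith))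
    have harg : Real.sqrt 2 * Real.cos φ - Real.sqrt 2 * Real.cos θ
        = (2 * Real.sqrt 2) * Real.sin ((θ+φ)/2) * Real.sin ((θ-φ)/2) := by
      have h1 : Real.cos φ - Real.cos θ
          = -2 * Real.sin ((φ+θ)/2) * Real.sin ((φ-θ)/2) := Real.cos_sub_cos φ θ
      have h2 : Real.sqrt 2 * Real.cos φ - Real.sqrt 2 * Real.cos θ
          = Real.sqrt 2 * (Real.cos φ - Real.cos θ) := by ring
      rw [h2, h1, show (φ-θ)/2 = -((θ-φ)/2) by ring, Real.sin_neg,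
        show (φ+θ)/2 = (θ+φ)/2 by ring]
      ring
    have hne1 : (2 * Real.sqrt 2) * Real.sin ((θ+φ)/2) ≠ 0 := by positivity
    rw [harg, abs_mul, abs_mul, Real.log_mul (by simpa using hne1) (abs_ne_zero.2 hs2'),
      Real.log_mul (by positivity) (abs_ne_zero.2 (ne_of_gt hs1)),
      abs_of_pos (by positivity : (0:ℝ) < 2 * Real.sqrt 2)]
    have h2s : 2 * (Real.sin θ)^2 = 1 - Real.cos (2*θ) := by
      rw [Real.cos_two_mul]
      linear_combination 2 * (Real.sin_sq_add_cos_sq θ)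
    rw [h2s]
    show (c₀ + Real.log |Real.sin ((θ+φ)/2)| + Real.log |Real.sin ((θ-φ)/2)|) * _ = _
    rfl
  rw [step1]
  -- integrability of the pieces
  have hgplusInt : IntervalIntegrable (fun θ => g ((θ+φ)/2)) volume 0 π := by
    have h0 := gInt (φ/2) ((π+φ)/2) (by linarith) (by linarith) (by linarith) (by linarith)
    have h1 := h0.comp_add_right (φ/2)
    rw [show φ/2 - φ/2 = (0:ℝ) by ring, show (π+φ)/2 - φ/2 = π/2 by ring] at h1
    have h2 := h1.comp_mul_right (c := 2⁻¹)
    rw [show (0:ℝ)/2⁻¹ = 0 by norm_num, show (π/2)/2⁻¹ = π by field_simp] at h2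
    have : (fun x => g (x * 2⁻¹ + φ/2)) = fun θ => g ((θ+φ)/2) := by
      funext x; congr 1; ring
    rwa [this] at h2
  have hgminusInt : IntervalIntegrable (fun θ => g ((θ-φ)/2)) volume 0 π := by
    have h0 := gInt (-φ/2) ((π-φ)/2) (by linarith) (by linarith) (by linarith) (by linarith)
    have h1 := h0.comp_add_right (-φ/2)
    rw [show -φ/2 - -φ/2 = (0:ℝ) by ring, show (π-φ)/2 - -φ/2 = π/2 by ring] at h1
    have h2 := h1.comp_mul_right (c := 2⁻¹)
    rw [show (0:ℝ)/2⁻¹ = 0 by norm_num, show (π/2)/2⁻¹ = π by field_simp] at h2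
    have : (fun x => g (x * 2⁻¹ + -φ/2)) = fun θ => g ((θ-φ)/2) := by
      funext x; congr 1; ring
    rwa [this] at h2
  have hcos2cont : Continuous (fun θ : ℝ => 1 - Real.cos (2*θ)) :=
    continuous_const.sub (Real.continuous_cos.comp (continuous_const.mul continuous_id))
  have hIc : IntervalIntegrable (fun θ : ℝ => c₀ * (1 - Real.cos (2*θ))) volume 0 π :=
    Continuous.intervalIntegrable (continuous_const.mul hcos2cont) _ _
  have hIp : IntervalIntegrable (fun θ => g ((θ+φ)/2) * (1 - Real.cos (2*θ))) volume 0 π :=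
    hgplusInt.mul_continuousOn hcos2cont.continuousOn
  have hIm : IntervalIntegrable (fun θ => g ((θ-φ)/2) * (1 - Real.cos (2*θ))) volume 0 π :=
    hgminusInt.mul_continuousOn hcos2cont.continuousOn
  have hsplit : ∫ θ in (0:ℝ)..π, ((c₀ + g ((θ+φ)/2) + g ((θ-φ)/2)) * (1 - Real.cos (2*θ)))
      = (∫ θ in (0:ℝ)..π, c₀ * (1 - Real.cos (2*θ)))
        + (∫ θ in (0:ℝ)..π, g ((θ+φ)/2) * (1 - Real.cos (2*θ)))
        + (∫ θ in (0:ℝ)..π, g ((θ-φ)/2) * (1 - Real.cos (2*θ))) := by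
    rw [← intervalIntegral.integral_add hIc hIp, ← intervalIntegral.integral_add (hIc.add hIp) hIm]
    apply intervalIntegral.integral_congr
    intro x _
    ring
  rw [hsplit]
  -- the constant piece
  have hcos2int : ∫ θ in (0:ℝ)..π, Real.cos (2*θ) = 0 := by
    rw [intervalIntegral.integral_comp_mul_left (fun x => Real.cos x) two_ne_zero,
      show (2:ℝ)*0 = 0 by ring, integral_cos, Real.sin_two_pi, Real.sin_zero]
    simp
  have hT0 : ∫ θ in (0:ℝ)..π, c₀ * (1 - Real.cos (2*θ)) = c₀ * π := by
    rw [intervalIntegral.integral_const_mul,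
      intervalIntegral.integral_sub (intervalIntegrable_const (c := _))
        ((Continuous.intervalIntegrable (by fun_prop) _ _ :
          IntervalIntegrable (fun θ : ℝ => Real.cos (2*θ)) volume 0 π)), hcos2int]
    simp
  -- W-integrability on subintervals
  have hWInt : ∀ a b : ℝ, -(π/2) ≤ a → a ≤ π → -(π/2) ≤ b → b ≤ π →
      IntervalIntegrable W volume a b := by
    intro a b h1 h2 h3 h4
    exact (gInt a b h1 h2 h3 h4).mul_continuousOn (continuous_const.sub
      (Real.continuous_cos.comp ((continuous_const.mul continuous_id).sub
        continuous_const))).continuousOn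
  -- the plus piece
  have hTplus : ∫ θ in (0:ℝ)..π, g ((θ+φ)/2) * (1 - Real.cos (2*θ))
      = 2 * ∫ x in (φ/2)..((φ+π)/2), W x := by
    have heq : (fun θ => g ((θ+φ)/2) * (1 - Real.cos (2*θ)))
        = fun θ => (fun y => W (y/2)) (θ + φ) := by
      funext θ
      show _ = W ((θ + φ)/2)
      simp only [hW]
      rw [show 4*((θ+φ)/2) - 2*φ = 2*θ by ring]
    rw [heq, intervalIntegral.integral_comp_add_right (fun y => W (y/2)) φ,
      intervalIntegral.integral_comp_div (c := 2) W two_ne_zero]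
    rw [show (0:ℝ)+φ = φ by ring, show (π+φ)/2 = (φ+π)/2 by ring, smul_eq_mul]
  -- the minus piece
  have hTminus : ∫ θ in (0:ℝ)..π, g ((θ-φ)/2) * (1 - Real.cos (2*θ))
      = 2 * ∫ x in ((φ-π)/2)..(φ/2), W x := by
    set W' : ℝ → ℝ := fun x => g x * (1 - Real.cos (4*x + 2*φ)) with hW'
    have heq : (fun θ => g ((θ-φ)/2) * (1 - Real.cos (2*θ)))
        = fun θ => (fun y => W' (y/2)) (θ + -φ) := by
      funext θ
      show _ = W' ((θ + -φ)/2)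
      simp only [hW']
      rw [show (θ + -φ)/2 = (θ-φ)/2 by ring, show 4*((θ-φ)/2) + 2*φ = 2*θ by ring]
    rw [heq, intervalIntegral.integral_comp_add_right (fun y => W' (y/2)) (-φ),
      intervalIntegral.integral_comp_div (c := 2) W' two_ne_zero, smul_eq_mul]
    congr 1
    have hWW' : (fun x => W' (-x)) = W := by
      funext x
      simp only [hW', hW, g_neg]
      rw [show 4 * -x + 2*φ = -(4*x - 2*φ) by ring, Real.cos_neg]
    have h := intervalIntegral.integral_comp_neg (a := (φ-π)/2) (b := φ/2) W'
    rw [hWW', show -(φ/2) = (0 + -φ)/2 by ring, show -((φ-π)/2) = (π + -φ)/2 by ring] at h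
    rw [← h]
  rw [hT0, hTplus, hTminus]
  -- combine the two W integrals and use periodicity
  have hWper : Function.Periodic W π := by
    intro x
    simp only [hW]
    rw [g_add_pi, show 4*(x+π) - 2*φ = (4*x - 2*φ) + 2*π + 2*π by ring,
      Real.cos_add_two_pi, Real.cos_add_two_pi]
  have hWsum : (∫ x in (φ/2)..((φ+π)/2), W x) + (∫ x in ((φ-π)/2)..(φ/2), W x)
      = ∫ x in (0:ℝ)..π, W x := by
    have hch := intervalIntegral.integral_add_adjacent_intervals
      (hWInt ((φ-π)/2) (φ/2) (by linarith) (by linarith) (by linarith) (by linarith))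
      (hWInt (φ/2) ((φ+π)/2) (by linarith) (by linarith) (by linarith) (by linarith))
    have hshift := hWper.intervalIntegral_add_eq ((φ-π)/2) 0
    rw [show (φ-π)/2 + π = (φ+π)/2 by ring, zero_add] at hshift
    rw [add_comm, hch, hshift]
  have hWval : ∫ x in (0:ℝ)..π, W x = -π * Real.log 2 + π/4 * Real.cos (2*φ) := Wint (2*φ)
  have hc₀val : c₀ = Real.log 2 + Real.log (Real.sqrt 2) := Real.log_mul (by norm_num) (ne_of_gt hs2)
  have hlogsqrt : Real.log (Real.sqrt 2) = Real.log 2 / 2 := by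
    rw [Real.log_sqrt (by norm_num)]
  have hcos2φ : Real.cos (2*φ) = 2*(Real.cos φ)^2 - 1 := Real.cos_two_mul φ
  have : 2 * (∫ x in (φ/2)..((φ+π)/2), W x) + 2 * (∫ x in ((φ-π)/2)..(φ/2), W x)
      = 2 * ∫ x in (0:ℝ)..π, W x := by rw [← hWsum]; ring
  rw [show c₀ * π + 2 * (∫ x in (φ/2)..((φ+π)/2), W x) + 2 * (∫ x in ((φ-π)/2)..(φ/2), W x)
      = c₀ * π + (2 * (∫ x in (φ/2)..((φ+π)/2), W x) + 2 * (∫ x in ((φ-π)/2)..(φ/2), W x)) by ring,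
    this, hWval, hc₀val, hlogsqrt, hcos2φ]
  ring


lemma subst (u : ℝ) (hu1 : -Real.sqrt 2 < u) (hu2 : u < Real.sqrt 2) :
    ∫ s in (-Real.sqrt 2)..(Real.sqrt 2), Real.log |u - s| * Real.sqrt (2 - s ^ 2)
    = ∫ θ in (0:ℝ)..π, Real.log |u - Real.sqrt 2 * Real.cos θ| * (2 * (Real.sin θ)^2) := by
  have hπ := Real.pi_pos
  have hs2 : (0:ℝ) < Real.sqrt 2 := Real.sqrt_pos.2 (by norm_num)
  have hsq : Real.sqrt 2 ^ 2 = 2 := Real.sq_sqrt (by norm_num)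
  have himg : (fun θ => Real.sqrt 2 * Real.cos θ) '' Ioo 0 π = Ioo (-Real.sqrt 2) (Real.sqrt 2) := by
    ext y
    constructor
    · rintro ⟨θ, hθ, rfl⟩
      have h1 : Real.cos π < Real.cos θ :=
        Real.strictAntiOn_cos ⟨hθ.1.le, hθ.2.le⟩ ⟨hπ.le, le_refl π⟩ hθ.2
      have h2 : Real.cos θ < Real.cos 0 :=
        Real.strictAntiOn_cos ⟨le_refl 0, hπ.le⟩ ⟨hθ.1.le, hθ.2.le⟩ hθ.1
      rw [Real.cos_pi] at h1
      rw [Real.cos_zero] at h2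
      constructor
      · show -Real.sqrt 2 < Real.sqrt 2 * Real.cos θ
        nlinarith
      · show Real.sqrt 2 * Real.cos θ < Real.sqrt 2
        nlinarith
    · intro hy
      have h1 : y / Real.sqrt 2 < 1 := (div_lt_one hs2).2 hy.2
      have h2 : -1 < y / Real.sqrt 2 := by
        rw [lt_div_iff₀ hs2]
        nlinarith [hy.1]
      refine ⟨Real.arccos (y / Real.sqrt 2), ⟨Real.arccos_pos.2 h1, ?_⟩, ?_⟩
      · refine lt_of_le_of_ne (Real.arccos_le_pi _) fun h => ?_
        have := Real.arccos_eq_pi.1 h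
        linarith
      · show Real.sqrt 2 * Real.cos (Real.arccos (y / Real.sqrt 2)) = y
        rw [Real.cos_arccos h2.le h1.le]
        field_simp
  have hderiv : ∀ θ ∈ Ioo (0:ℝ) π, HasDerivWithinAt (fun θ => Real.sqrt 2 * Real.cos θ)
      (Real.sqrt 2 * (-Real.sin θ)) (Ioo 0 π) θ := by
    intro θ _
    exact ((Real.hasDerivAt_cos θ).const_mul (Real.sqrt 2)).hasDerivWithinAt
  have hinj : InjOn (fun θ => Real.sqrt 2 * Real.cos θ) (Ioo 0 π) := by
    intro a ha b hb hab
    have : Real.cos a = Real.cos b := mul_left_cancel₀ (ne_of_gt hs2) hab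
    exact Real.injOn_cos ⟨ha.1.le, ha.2.le⟩ ⟨hb.1.le, hb.2.le⟩ this
  have h := integral_image_eq_integral_abs_deriv_smul measurableSet_Ioo hderiv hinj
    (fun s => Real.log |u - s| * Real.sqrt (2 - s ^ 2))
  rw [himg] at h
  rw [intervalIntegral.integral_of_le (by linarith), MeasureTheory.integral_Ioc_eq_integral_Ioo, h,
    intervalIntegral.integral_of_le hπ.le, MeasureTheory.integral_Ioc_eq_integral_Ioo]
  refine MeasureTheory.setIntegral_congr_fun measurableSet_Ioo fun θ hθ => ?_
  have hsin : 0 < Real.sin θ := Real.sin_pos_of_pos_of_lt_pi hθ.1 hθ.2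
  have habs : |Real.sqrt 2 * (-Real.sin θ)| = Real.sqrt 2 * Real.sin θ := by
    rw [abs_mul, abs_neg, abs_of_pos hs2, abs_of_pos hsin]
  have hsqrt : Real.sqrt (2 - (Real.sqrt 2 * Real.cos θ) ^ 2) = Real.sqrt 2 * Real.sin θ := by
    rw [mul_pow, hsq, show 2 - 2 * Real.cos θ ^ 2 = 2 * Real.sin θ ^ 2 by
      linear_combination (-2) * (Real.sin_sq_add_cos_sq θ)]
    rw [Real.sqrt_mul (by norm_num), Real.sqrt_sq_eq_abs, abs_of_pos hsin]
  simp only [habs, hsqrt, smul_eq_mul]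
  have h22 : Real.sqrt 2 * Real.sqrt 2 = 2 := Real.mul_self_sqrt (by norm_num)
  linear_combination (Real.log |u - Real.sqrt 2 * Real.cos θ| * Real.sin θ ^ 2) * h22


end Stmt13

open Stmt13 in
/-- The function
`u ↦ u² − (2/π) ∫_{−√2}^{√2} log|u − s| √(2 − s²) ds` is constant on `(−√2, √2)`. -/
theorem stmt_13 : ∃ c : ℝ, ∀ u ∈ Set.Ioo (-Real.sqrt 2) (Real.sqrt 2),
    u ^ 2 - (2 / Real.pi) *
      ∫ s in (-Real.sqrt 2)..(Real.sqrt 2), Real.log |u - s| * Real.sqrt (2 - s ^ 2) = c := by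
  use 1 + Real.log 2
  rintro u ⟨hu1, hu2⟩
  have hπ : (0:ℝ) < π := Real.pi_pos
  have hs2 : (0:ℝ) < Real.sqrt 2 := Real.sqrt_pos.2 (by norm_num)
  have h1 : u / Real.sqrt 2 < 1 := (div_lt_one hs2).2 hu2
  have h2 : -1 < u / Real.sqrt 2 := by rw [lt_div_iff₀ hs2]; nlinarith
  set φ := Real.arccos (u / Real.sqrt 2) with hφ
  have hφ0 : 0 < φ := Real.arccos_pos.2 h1
  have hφπ : φ < π := by
    refine lt_of_le_of_ne (Real.arccos_le_pi _) fun h => ?_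
    have := Real.arccos_eq_pi.1 h
    linarith
  have hcosφ : Real.cos φ = u / Real.sqrt 2 := Real.cos_arccos h2.le h1.le
  have hcos : Real.sqrt 2 * Real.cos φ = u := by rw [hcosφ]; field_simp
  have hmf := main_formula φ hφ0 hφπ
  rw [hcos] at hmf
  rw [subst u hu1 hu2, hmf]
  have hcsq : (Real.cos φ)^2 = u^2 / 2 := by
    rw [hcosφ, div_pow, Real.sq_sqrt (by norm_num : (0:ℝ) ≤ 2)]
  rw [hcsq]
  field_simp
  ring


end
end

section
/- Let R(z) be the unique analytic function on ℂ ∖ [−√2, √2] satisfying R(z)² = z² − 2 and R(z)/z → 1 as |z| → ∞. Then for every z ∈ ℂ ∖ [−√2, √2], (1/π) ∫_{−√2}^{√2} √(2 − s²)/(z − s) ds = z − R(z). -/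
open Real intervalIntegral Set Metric

lemma sqrt2_lt_sq {x : ℝ} (hx : Real.sqrt 2 < x) : 2 < x ^ 2 := by
  have h2 : (0:ℝ) < Real.sqrt 2 := by positivity
  nlinarith [Real.sq_sqrt (by norm_num : (2:ℝ) ≥ 0), sq_nonneg (x - Real.sqrt 2)]

lemma denom_pos {x : ℝ} (hx : Real.sqrt 2 < x) (t : ℝ) :
    0 < x - Real.sqrt 2 * Real.sin t := by
  have h1 : Real.sqrt 2 * Real.sin t ≤ Real.sqrt 2 * 1 :=
    mul_le_mul_of_nonneg_left (Real.sin_le_one t) (by positivity)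
  nlinarith

lemma core_integral {x : ℝ} (hx : Real.sqrt 2 < x) :
    ∫ t in (-(Real.pi/2))..(Real.pi/2), (x - Real.sqrt 2 * Real.sin t)⁻¹
      = Real.pi / Real.sqrt (x ^ 2 - 2) := by
  set c := Real.sqrt (x ^ 2 - 2) with hc
  have hx2 : 2 < x ^ 2 := sqrt2_lt_sq hx
  have hcpos : 0 < c := Real.sqrt_pos.mpr (by linarith)
  have hc2 : c ^ 2 = x ^ 2 - 2 := Real.sq_sqrt (by linarith)
  set F : ℝ → ℝ := fun t => (2 / c) * Real.arctan ((x * Real.tan (t / 2) - Real.sqrt 2) / c) with hF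
  have hs2 : Real.sqrt 2 ^ 2 = 2 := Real.sq_sqrt (by norm_num)
  have hderiv : ∀ t ∈ uIcc (-(Real.pi/2)) (Real.pi/2),
      HasDerivAt F ((x - Real.sqrt 2 * Real.sin t)⁻¹) t := by
    intro t ht
    rw [uIcc_of_le (by linarith [Real.pi_pos])] at ht
    have hco : 0 < Real.cos (t / 2) := by
      apply Real.cos_pos_of_mem_Ioo
      constructor <;> [linarith [ht.1, Real.pi_pos]; linarith [ht.2, Real.pi_pos]]
    have htan : HasDerivAt (fun t : ℝ => Real.tan (t / 2))
        (1 / Real.cos (t / 2) ^ 2 * (1 / 2)) t := by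
      have := (Real.hasDerivAt_tan hco.ne').comp t ((hasDerivAt_id t).div_const 2)
      simpa [Function.comp_def] using this
    have hg : HasDerivAt (fun t : ℝ => (x * Real.tan (t / 2) - Real.sqrt 2) / c)
        (x * (1 / Real.cos (t / 2) ^ 2 * (1 / 2)) / c) t :=
      ((htan.const_mul x).sub_const _).div_const c
    have harc := (Real.hasDerivAt_arctan ((x * Real.tan (t / 2) - Real.sqrt 2) / c)).comp t hg
    have hfin := harc.const_mul (2 / c)
    refine hfin.congr_deriv ?_
    symm
    have hu : 0 < x - Real.sqrt 2 * Real.sin t := denom_pos hx t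
    have hsin : Real.sin t = 2 * Real.sin (t / 2) * Real.cos (t / 2) := by
      rw [show t = 2 * (t / 2) by ring, Real.sin_two_mul]; ring_nf
    have hpyth : Real.sin (t / 2) ^ 2 + Real.cos (t / 2) ^ 2 = 1 := Real.sin_sq_add_cos_sq _
    have htandef : Real.tan (t / 2) = Real.sin (t / 2) / Real.cos (t / 2) := Real.tan_eq_sin_div_cos _
    rw [hsin, htandef]
    have hcone : Real.cos (t/2) ≠ 0 := hco.ne'
    rw [hsin] at hu
    have hu' : x - Real.sqrt 2 * 2 * Real.sin (t/2) * Real.cos (t/2) ≠ 0 := ne_of_gt (by linarith [hu])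
    field_simp
    linear_combination
      (Real.cos (t/2)^2 * hc2 + Real.cos (t/2)^2 * hs2 + x^2 * hpyth)
  have hcont : Continuous fun t : ℝ => (x - Real.sqrt 2 * Real.sin t)⁻¹ := by
    apply Continuous.inv₀ (by continuity)
    intro t; exact (denom_pos hx t).ne'
  rw [integral_eq_sub_of_hasDerivAt hderiv (hcont.intervalIntegrable _ _)]
  have ht4 : Real.tan (Real.pi / 2 / 2) = 1 := by
    rw [show Real.pi / 2 / 2 = Real.pi / 4 by ring]; exact Real.tan_pi_div_four
  have ht4' : Real.tan (-(Real.pi / 2) / 2) = -1 := by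
    rw [show -(Real.pi / 2) / 2 = -(Real.pi / 4) by ring, Real.tan_neg, Real.tan_pi_div_four]
  rw [hF]
  simp only [ht4, ht4']
  have hp : (0:ℝ) < (x - Real.sqrt 2) / c := by
    apply div_pos _ hcpos
    linarith
  have hinv : (x + Real.sqrt 2) / c = ((x - Real.sqrt 2) / c)⁻¹ := by
    apply eq_inv_of_mul_eq_one_left
    rw [div_mul_div_comm, div_eq_one_iff_eq (by positivity)]
    linear_combination -hc2 - hs2
  have harct : Real.arctan ((x * -1 - Real.sqrt 2) / c) = -Real.arctan ((x + Real.sqrt 2) / c) := by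
    rw [← Real.arctan_neg]; ring_nf
  rw [harct, hinv, Real.arctan_inv_of_pos hp]
  field_simp
  ring
lemma real_integral {x : ℝ} (hx : Real.sqrt 2 < x) :
    ∫ s in (-Real.sqrt 2)..(Real.sqrt 2), Real.sqrt (2 - s ^ 2) / (x - s)
      = Real.pi * x - Real.pi * Real.sqrt (x ^ 2 - 2) := by
  have hpi := Real.pi_pos
  have hx2 : 2 < x ^ 2 := sqrt2_lt_sq hx
  have hs2 : Real.sqrt 2 ^ 2 = 2 := Real.sq_sqrt (by norm_num)
  have hsub : ∀ t ∈ uIcc (-(Real.pi/2)) (Real.pi/2),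
      HasDerivAt (fun t : ℝ => Real.sqrt 2 * Real.sin t) (Real.sqrt 2 * Real.cos t) t :=
    fun t _ => (Real.hasDerivAt_sin t).const_mul _
  have himg : ∀ s ∈ (fun t : ℝ => Real.sqrt 2 * Real.sin t) '' uIcc (-(Real.pi/2)) (Real.pi/2),
      x - s ≠ 0 := by
    rintro s ⟨t, -, rfl⟩
    exact (denom_pos hx t).ne'
  have hcg : ContinuousOn (fun s : ℝ => Real.sqrt (2 - s ^ 2) / (x - s))
      ((fun t : ℝ => Real.sqrt 2 * Real.sin t) '' uIcc (-(Real.pi/2)) (Real.pi/2)) := by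
    apply ContinuousOn.div
    · exact (continuous_const.sub (continuous_pow 2)).sqrt.continuousOn
    · exact (continuous_const.sub continuous_id).continuousOn
    · exact himg
  have key := integral_comp_smul_deriv' hsub
    ((continuous_const.mul Real.continuous_cos).continuousOn) hcg
  have hends : Real.sqrt 2 * Real.sin (-(Real.pi/2)) = -Real.sqrt 2 ∧
      Real.sqrt 2 * Real.sin (Real.pi/2) = Real.sqrt 2 := by
    rw [Real.sin_neg, Real.sin_pi_div_two]; constructor <;> ring
  rw [hends.1, hends.2] at key
  rw [← key]
  have hcongr : ∀ t ∈ uIcc (-(Real.pi/2)) (Real.pi/2),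
      (Real.sqrt 2 * Real.cos t) •
        ((fun s : ℝ => Real.sqrt (2 - s ^ 2) / (x - s)) ∘ fun t => Real.sqrt 2 * Real.sin t) t
      = (2 - x ^ 2) * (x - Real.sqrt 2 * Real.sin t)⁻¹ + (x + Real.sqrt 2 * Real.sin t) := by
    intro t ht
    rw [uIcc_of_le (by linarith)] at ht
    have hcos : 0 ≤ Real.cos t := Real.cos_nonneg_of_mem_Icc (by simpa using ht)
    have h1 : Real.sqrt (2 - (Real.sqrt 2 * Real.sin t) ^ 2) = Real.sqrt 2 * Real.cos t := by
      have : 2 - (Real.sqrt 2 * Real.sin t) ^ 2 = (Real.sqrt 2 * Real.cos t) ^ 2 := by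
        have := Real.sin_sq_add_cos_sq t
        nlinarith [hs2]
      rw [this, Real.sqrt_sq (by positivity)]
    simp only [Function.comp_apply, smul_eq_mul, h1]
    have hu : 0 < x - Real.sqrt 2 * Real.sin t := denom_pos hx t
    have hpy := Real.sin_sq_add_cos_sq t
    field_simp
    nlinarith [hpy, hs2]
  rw [integral_congr hcongr]
  have hi1 : IntervalIntegrable (fun t : ℝ => (2 - x ^ 2) * (x - Real.sqrt 2 * Real.sin t)⁻¹)
      MeasureTheory.volume (-(Real.pi/2)) (Real.pi/2) := by
    apply Continuous.intervalIntegrable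
    exact continuous_const.mul ((continuous_const.sub
      (continuous_const.mul Real.continuous_sin)).inv₀ fun t => (denom_pos hx t).ne')
  have hi2 : IntervalIntegrable (fun t : ℝ => x + Real.sqrt 2 * Real.sin t)
      MeasureTheory.volume (-(Real.pi/2)) (Real.pi/2) := by
    exact (continuous_const.add (continuous_const.mul Real.continuous_sin)).intervalIntegrable _ _
  rw [integral_add hi1 hi2, integral_const_mul, core_integral hx]
  have h3 : (∫ t in (-(Real.pi/2))..(Real.pi/2), (x + Real.sqrt 2 * Real.sin t))
      = Real.pi * x := by
    rw [integral_add (f := fun _ => x) (g := fun t => Real.sqrt 2 * Real.sin t)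
      (continuous_const.intervalIntegrable _ _)
      ((continuous_const.mul Real.continuous_sin).intervalIntegrable _ _)]
    rw [integral_const, integral_const_mul, integral_sin]
    rw [Real.cos_neg, Real.cos_pi_div_two]
    simp
  rw [h3]
  have hcpos : 0 < Real.sqrt (x ^ 2 - 2) := Real.sqrt_pos.mpr (by linarith)
  have hc2 : Real.sqrt (x ^ 2 - 2) ^ 2 = x ^ 2 - 2 := Real.sq_sqrt (by linarith)
  field_simp
  nlinarith [hc2]

noncomputable def Kset : Set ℂ :=
  {z : ℂ | z.im = 0 ∧ -Real.sqrt 2 ≤ z.re ∧ z.re ≤ Real.sqrt 2}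

lemma Kset_closed : IsClosed Kset := by
  have : Kset = Complex.im ⁻¹' {0} ∩ Complex.re ⁻¹' Icc (-Real.sqrt 2) (Real.sqrt 2) := by
    ext z; simp [Kset, Set.mem_Icc, and_assoc]
  rw [this]
  exact (isClosed_singleton.preimage Complex.continuous_im).inter
    (isClosed_Icc.preimage Complex.continuous_re)

lemma Kset_nonempty : Kset.Nonempty := by
  refine ⟨0, by simp [Kset, Real.sqrt_nonneg]⟩

lemma mem_Kset_ofReal {s : ℝ} (hs : s ∈ Icc (-Real.sqrt 2) (Real.sqrt 2)) :
    (s : ℂ) ∈ Kset := by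
  simpa [Kset] using hs

lemma dist_lower {z₀ : ℂ} (hz : z₀ ∉ Kset) {z : ℂ} {s : ℝ}
    (hzb : z ∈ ball z₀ (infDist z₀ Kset / 2)) (hs : s ∈ Icc (-Real.sqrt 2) (Real.sqrt 2)) :
    infDist z₀ Kset / 2 ≤ ‖z - s‖ := by
  have h1 : infDist z₀ Kset ≤ dist z₀ (s : ℂ) := infDist_le_dist_of_mem (mem_Kset_ofReal hs)
  have h2 : dist z z₀ < infDist z₀ Kset / 2 := mem_ball.mp hzb
  have h3 : dist z₀ (s:ℂ) ≤ dist z₀ z + dist z (s:ℂ) := dist_triangle _ _ _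
  have : dist z (s:ℂ) = ‖z - s‖ := by rw [Complex.dist_eq]
  rw [← this]
  rw [dist_comm z₀ z] at h3
  linarith

lemma analytic_lhs : AnalyticOnNhd ℂ
    (fun z : ℂ => ∫ s in (-Real.sqrt 2)..(Real.sqrt 2),
      ((Real.sqrt (2 - s ^ 2) : ℝ) : ℂ) / (z - s)) Ksetᶜ := by
  apply DifferentiableOn.analyticOnNhd _ Kset_closed.isOpen_compl
  intro z₀ hz₀
  apply DifferentiableAt.differentiableWithinAt
  have hz₀' : z₀ ∉ Kset := hz₀
  set δ := infDist z₀ Kset with hδ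
  have hδpos : 0 < δ := (Kset_closed.notMem_iff_infDist_pos Kset_nonempty).mp hz₀'
  have hεpos : 0 < δ / 2 := by linarith
  have hsub : uIoc (-Real.sqrt 2) (Real.sqrt 2) ⊆ Icc (-Real.sqrt 2) (Real.sqrt 2) := by
    rw [uIoc_of_le (by linarith [Real.sqrt_nonneg 2] : -Real.sqrt 2 ≤ Real.sqrt 2)]
    exact Ioc_subset_Icc_self
  have hne : ∀ z ∈ ball z₀ (δ/2), ∀ s ∈ Icc (-Real.sqrt 2) (Real.sqrt 2), z - (s:ℂ) ≠ 0 := by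
    intro z hzb s hs
    have := dist_lower hz₀' hzb hs
    intro h; rw [h] at this; simp at this; linarith
  have hcontOn : ∀ z ∈ ball z₀ (δ/2), ContinuousOn
      (fun s : ℝ => ((Real.sqrt (2 - s ^ 2) : ℝ) : ℂ) / (z - s))
      (Icc (-Real.sqrt 2) (Real.sqrt 2)) := by
    intro z hzb
    apply ContinuousOn.div
    · exact (Complex.continuous_ofReal.comp
        ((continuous_const.sub (continuous_pow 2)).sqrt)).continuousOn
    · exact (continuous_const.sub Complex.continuous_ofReal).continuousOn
    · exact fun s hs => hne z hzb s hs
  have hmain := intervalIntegral.hasDerivAt_integral_of_dominated_loc_of_deriv_le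
    (F := fun (z : ℂ) (s : ℝ) => ((Real.sqrt (2 - s ^ 2) : ℝ) : ℂ) / (z - s))
    (F' := fun (z : ℂ) (s : ℝ) => -((Real.sqrt (2 - s ^ 2) : ℝ) : ℂ) / (z - s) ^ 2)
    (x₀ := z₀) (a := -Real.sqrt 2) (b := Real.sqrt 2) (μ := MeasureTheory.volume)
    (bound := fun _ => Real.sqrt 2 / (δ/2) ^ 2) (s := ball z₀ (δ/2)) (ball_mem_nhds z₀ hεpos)
    ?_ ?_ ?_ ?_ ?_ ?_
  · exact hmain.2.differentiableAt
  · filter_upwards [ball_mem_nhds z₀ hεpos] with z hzb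
    exact ((hcontOn z hzb).mono hsub).aestronglyMeasurable measurableSet_uIoc
  · exact ((hcontOn z₀ (mem_ball_self hεpos)).mono (by
      rw [uIcc_of_le (by linarith [Real.sqrt_nonneg 2])])).intervalIntegrable
  · apply ContinuousOn.aestronglyMeasurable _ measurableSet_uIoc
    apply ContinuousOn.mono _ hsub
    apply ContinuousOn.div
    · exact (Complex.continuous_ofReal.comp
        ((continuous_const.sub (continuous_pow 2)).sqrt)).neg.continuousOn
    · exact ((continuous_const.sub Complex.continuous_ofReal).pow 2).continuousOn
    · exact fun s hs => pow_ne_zero 2 (hne z₀ (mem_ball_self hεpos) s hs)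
  · apply Filter.Eventually.of_forall
    intro s hsI z hzb
    have hs : s ∈ Icc (-Real.sqrt 2) (Real.sqrt 2) := hsub hsI
    have hd := dist_lower hz₀' hzb hs
    rw [norm_div, norm_neg, norm_pow]
    have h1 : ‖((Real.sqrt (2 - s ^ 2) : ℝ) : ℂ)‖ ≤ Real.sqrt 2 := by
      rw [Complex.norm_real, Real.norm_eq_abs, abs_of_nonneg (Real.sqrt_nonneg _)]
      exact Real.sqrt_le_sqrt (by nlinarith [hs.1, hs.2, Real.sq_sqrt (by norm_num : (2:ℝ) ≥ 0)])
    have h2 : (δ/2) ^ 2 ≤ ‖z - (s:ℂ)‖ ^ 2 := by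
      apply pow_le_pow_left₀ (by linarith) _ 2
      simpa using hd
    exact div_le_div₀ (Real.sqrt_nonneg 2) h1 (by positivity) h2
  · exact intervalIntegrable_const
  · apply Filter.Eventually.of_forall
    intro s hsI z hzb
    have hs : s ∈ Icc (-Real.sqrt 2) (Real.sqrt 2) := hsub hsI
    have hzs := hne z hzb s hs
    have h := (((hasDerivAt_id z).sub_const (s:ℂ)).inv hzs).const_mul
      ((Real.sqrt (2 - s ^ 2) : ℝ) : ℂ)
    simp only [div_eq_mul_inv]
    refine h.congr_deriv ?_
    simp only [id]; ring


lemma sqrt2_lt_two : Real.sqrt 2 < 2 := by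
  nlinarith [Real.sq_sqrt (by norm_num : (2:ℝ) ≥ 0), Real.sqrt_nonneg 2]

lemma preconn : IsPreconnected Ksetᶜ := by
  have hA : IsPreconnected ({z : ℂ | Real.sqrt 2 < z.re} ∪ {z : ℂ | 0 < z.im}) := by
    apply IsPreconnected.union (2 + Complex.I)
    · simp [Complex.add_re]
    · simp [Complex.add_im]
    · exact (convex_halfSpace_re_gt _).isPreconnected
    · exact (convex_halfSpace_im_gt _).isPreconnected
  have hB : IsPreconnected ({z : ℂ | z.im < 0} ∪ {z : ℂ | z.re < -Real.sqrt 2}) := by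
    apply IsPreconnected.union (-2 - Complex.I)
    · simp [Complex.sub_im]
    · simp [Complex.sub_re]
    · exact (convex_halfSpace_im_lt _).isPreconnected
    · exact (convex_halfSpace_re_lt _).isPreconnected
  have hAB : IsPreconnected (({z : ℂ | Real.sqrt 2 < z.re} ∪ {z : ℂ | 0 < z.im}) ∪
      ({z : ℂ | z.im < 0} ∪ {z : ℂ | z.re < -Real.sqrt 2})) := by
    apply IsPreconnected.union (2 - Complex.I) _ _ hA hB
    · left; simp [Complex.sub_re]
    · left; simp [Complex.sub_im]
  convert hAB using 1
  ext z
  simp only [Kset, mem_compl_iff, mem_setOf_eq, mem_union]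
  constructor
  · intro h
    by_cases him : z.im = 0
    · have h2 : ¬(-Real.sqrt 2 ≤ z.re ∧ z.re ≤ Real.sqrt 2) := fun hc => h ⟨him, hc⟩
      push_neg at h2
      rcases le_or_gt (-Real.sqrt 2) z.re with h3 | h3
      · left; left; exact h2 h3
      · right; right; exact h3
    · rcases (lt_or_gt_of_ne him) with h1 | h1
      · right; left; exact h1
      · left; right; exact h1
  · rintro ((h|h)|(h|h)) ⟨him, h1, h2⟩ <;> linarith [him.le, him.ge]

section Rlemmas
variable (R : ℂ → ℂ)
  (hR : AnalyticOnNhd ℂ R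
    {z : ℂ | ¬(z.im = 0 ∧ -Real.sqrt 2 ≤ z.re ∧ z.re ≤ Real.sqrt 2)})
  (hR2 : ∀ z : ℂ, ¬(z.im = 0 ∧ -Real.sqrt 2 ≤ z.re ∧ z.re ≤ Real.sqrt 2) →
    R z ^ 2 = z ^ 2 - 2)
  (hRinf : Filter.Tendsto (fun z : ℂ => R z / z)
    (Filter.comap (fun z : ℂ => ‖z‖) Filter.atTop) (nhds 1))

lemma mem_domain_of_gt {x : ℝ} (hx : Real.sqrt 2 < x) :
    ¬((x:ℂ).im = 0 ∧ -Real.sqrt 2 ≤ (x:ℂ).re ∧ (x:ℂ).re ≤ Real.sqrt 2) := by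
  simp only [Complex.ofReal_im, Complex.ofReal_re]
  rintro ⟨-, -, h⟩; linarith

include hR2 in
lemma Rsq_real {x : ℝ} (hx : Real.sqrt 2 < x) :
    (R x).im = 0 ∧ (R x).re ^ 2 = x ^ 2 - 2 ∧ (R x).re ≠ 0 := by
  have hx2 : 2 < x ^ 2 := by
    nlinarith [Real.sq_sqrt (by norm_num : (2:ℝ) ≥ 0), Real.sqrt_nonneg 2,
      sq_nonneg (x - Real.sqrt 2)]
  have h := hR2 x (mem_domain_of_gt hx)
  have h2 : ((x:ℂ))^2 - 2 = (((x^2 - 2 : ℝ)) : ℂ) := by push_cast; ring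
  rw [h2, Complex.ext_iff] at h
  simp only [pow_two, Complex.mul_re, Complex.mul_im, Complex.ofReal_re, Complex.ofReal_im] at h
  obtain ⟨hre, him⟩ := h
  have hb : (R x).im = 0 := by
    by_contra hb
    have ha : (R x).re = 0 := by
      rcases mul_eq_zero.mp (by linarith : (R x).re * (R x).im = 0) with h | h
      · exact h
      · exact absurd h hb
    nlinarith [sq_nonneg ((R x).im)]
  refine ⟨hb, by rw [pow_two]; rw [hb] at hre; linarith, ?_⟩
  intro ha
  rw [ha, hb] at hre
  simp at hre
  nlinarith

include hR hR2 hRinf in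
lemma Rre_pos : ∀ x : ℝ, Real.sqrt 2 < x → 0 < (R x).re := by
  have hof : Filter.Tendsto (fun x : ℝ => (x:ℂ)) Filter.atTop
      (Filter.comap (fun z : ℂ => ‖z‖) Filter.atTop) := by
    rw [Filter.tendsto_comap_iff]
    have h : ((fun z : ℂ => ‖z‖) ∘ fun x : ℝ => (x:ℂ)) = fun x : ℝ => |x| := by
      funext x; simp [Complex.norm_real]
    rw [h]; exact Filter.tendsto_abs_atTop_atTop
  have h1 : Filter.Tendsto (fun x : ℝ => (R x).re / x) Filter.atTop (nhds 1) := by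
    have h2 := (Complex.continuous_re.tendsto 1).comp (hRinf.comp hof)
    simpa [Function.comp_def] using h2
  have hev : ∀ᶠ x : ℝ in Filter.atTop, 1/2 < (R x).re / x :=
    h1.eventually (eventually_gt_nhds (by norm_num))
  intro x hx
  by_contra hneg
  push_neg at hneg
  obtain ⟨him, hsq, hne⟩ := Rsq_real R hR2 hx
  have hlt : (R x).re < 0 := lt_of_le_of_ne hneg hne
  obtain ⟨N, hN1, hN2⟩ := (hev.and (Filter.eventually_ge_atTop (max (x+1) 1))).exists
  have hNx : x < N := lt_of_lt_of_le (by linarith) (le_trans (le_max_left _ _) hN2)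
  have hN1' : (1:ℝ) ≤ N := le_trans (le_max_right _ _) hN2
  have hNre : 0 < (R N).re := by
    have h3 := (lt_div_iff₀ (by linarith : (0:ℝ) < N)).mp hN1
    linarith
  have hcont : ContinuousOn (fun t : ℝ => (R t).re) (Icc x N) := by
    intro t ht
    have htmem := mem_domain_of_gt (lt_of_lt_of_le hx ht.1)
    exact ((Complex.continuous_re.continuousAt.comp (hR _ htmem).continuousAt).comp
      Complex.continuous_ofReal.continuousAt).continuousWithinAt
  obtain ⟨c, hcmem, hc0⟩ := intermediate_value_Icc hNx.le hcont ⟨hlt.le, hNre.le⟩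
  exact (Rsq_real R hR2 (lt_of_lt_of_le hx hcmem.1)).2.2 hc0

include hR hR2 hRinf in
lemma Rval {x : ℝ} (hx : Real.sqrt 2 < x) :
    R x = ((Real.sqrt (x ^ 2 - 2) : ℝ) : ℂ) := by
  obtain ⟨him, hsq, -⟩ := Rsq_real R hR2 hx
  have hpos := Rre_pos R hR hR2 hRinf x hx
  apply Complex.ext
  · rw [Complex.ofReal_re, ← hsq, Real.sqrt_sq hpos.le]
  · rw [Complex.ofReal_im, him]
end Rlemmas




/-- Let `R` be the analytic branch of `√(z² − 2)` on `ℂ ∖ [−√2, √2]` with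
`R(z)/z → 1` as `|z| → ∞`. Then for every `z` off the segment,
`(1/π) ∫_{−√2}^{√2} √(2 − s²)/(z − s) ds = z − R(z)`. -/
theorem stmt_14 (R : ℂ → ℂ)
    (hR : AnalyticOnNhd ℂ R
      {z : ℂ | ¬(z.im = 0 ∧ -Real.sqrt 2 ≤ z.re ∧ z.re ≤ Real.sqrt 2)})
    (hR2 : ∀ z : ℂ, ¬(z.im = 0 ∧ -Real.sqrt 2 ≤ z.re ∧ z.re ≤ Real.sqrt 2) →
      R z ^ 2 = z ^ 2 - 2)
    (hRinf : Filter.Tendsto (fun z : ℂ => R z / z)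
      (Filter.comap (fun z : ℂ => ‖z‖) Filter.atTop) (nhds 1))
    (z : ℂ) (hz : ¬(z.im = 0 ∧ -Real.sqrt 2 ≤ z.re ∧ z.re ≤ Real.sqrt 2)) :
    (1 / (Real.pi : ℂ)) *
      ∫ s in (-Real.sqrt 2)..(Real.sqrt 2), ((Real.sqrt (2 - s ^ 2) : ℝ) : ℂ) / (z - s)
    = z - R z := by
  have hΩ : {z : ℂ | ¬(z.im = 0 ∧ -Real.sqrt 2 ≤ z.re ∧ z.re ≤ Real.sqrt 2)} = Ksetᶜ := rfl
  set L : ℂ → ℂ := fun w => (1 / (Real.pi : ℂ)) *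
      ∫ s in (-Real.sqrt 2)..(Real.sqrt 2), ((Real.sqrt (2 - s ^ 2) : ℝ) : ℂ) / (w - s) with hLdef
  have hL : AnalyticOnNhd ℂ L Ksetᶜ := analyticOnNhd_const.mul analytic_lhs
  have hRhs : AnalyticOnNhd ℂ (fun w : ℂ => w - R w) Ksetᶜ := by
    rw [hΩ] at hR
    exact analyticOnNhd_id.sub hR
  rw [hΩ] at hR
  have h2mem : (2:ℂ) ∈ Ksetᶜ := by
    simp only [Kset, mem_compl_iff, mem_setOf_eq]
    rintro ⟨-, -, h⟩
    simp at h
  have key : ∀ x : ℝ, Real.sqrt 2 < x → L x = (x : ℂ) - R x := by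
    intro x hx
    have hcast : (∫ s in (-Real.sqrt 2)..(Real.sqrt 2),
        ((Real.sqrt (2 - s ^ 2) : ℝ) : ℂ) / ((x:ℂ) - s))
        = ((∫ s in (-Real.sqrt 2)..(Real.sqrt 2), Real.sqrt (2 - s ^ 2) / (x - s) : ℝ) : ℂ) := by
      rw [← intervalIntegral.integral_ofReal]
      apply intervalIntegral.integral_congr
      intro s _
      push_cast
      ring
    rw [hLdef]
    simp only
    rw [hcast, real_integral hx, Rval R hR hR2 hRinf hx]
    have hπ : ((Real.pi : ℝ) : ℂ) ≠ 0 := Complex.ofReal_ne_zero.mpr Real.pi_ne_zero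
    push_cast
    field_simp
  have hu : Filter.Tendsto (fun n : ℕ => ((2 + 1/((n:ℝ)+1) : ℝ) : ℂ)) Filter.atTop
      (nhdsWithin (2:ℂ) {(2:ℂ)}ᶜ) := by
    apply tendsto_nhdsWithin_of_tendsto_nhds_of_eventually_within
    · have h0 : Filter.Tendsto (fun n : ℕ => (2 + 1/((n:ℝ)+1) : ℝ)) Filter.atTop (nhds 2) := by
        have := tendsto_one_div_add_atTop_nhds_zero_nat (𝕜 := ℝ)
        have h2 := (tendsto_const_nhds (x := (2:ℝ)) (f := Filter.atTop (α := ℕ))).add this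
        simpa using h2
      simpa [Function.comp_def] using (Complex.continuous_ofReal.tendsto 2).comp h0
    · apply Filter.Eventually.of_forall
      intro n
      simp only [mem_compl_iff, mem_singleton_iff]
      intro h
      have hpos : (0:ℝ) < 1/((n:ℝ)+1) := by positivity
      have hreal : (2 + 1/((n:ℝ)+1) : ℝ) = 2 := by exact_mod_cast h
      linarith
  have hfreq : ∃ᶠ w in nhdsWithin (2:ℂ) {(2:ℂ)}ᶜ, L w = w - R w := by
    apply hu.frequently
    apply Filter.Frequently.of_forall
    intro n
    apply key
    have : (0:ℝ) < 1/((n:ℝ)+1) := by positivity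
    linarith [sqrt2_lt_two]
  have heq := hL.eqOn_of_preconnected_of_frequently_eq hRhs preconn h2mem hfreq
  exact heq (by rw [← hΩ]; exact hz)
end
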